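/- arXiv:1001.5183 — 9 statements merged into one kernel-verified Lean document; each statement's English description precedes it below -/
import Mathlib

section
/- Let n ≥ 2 and W ≥ 1 be integers, and consider the player-1 energy parity game with states Q = {0,1,…,n−1} (all belonging to player 1), edges (i,i+1) and (i+1,i) for 0 ≤ i ≤ n−2 each of weight −W, a self-loop (n−1,n−1) of weight 1, priority 0 for state 0 and priority 1 for all other states. Then for every play ρ from state 0 and every initial credit c₀ ∈ ℕ, if ρ satisfies both the parity condition and the energy condition with initial credit c₀, then c₀ ≥ (n−1)·W. -/
variable {Q : Type*}

/-- A play: an infinite path in the edge relation `E`. -/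
def IsPlay (E : Q → Q → Prop) (ρ : ℕ → Q) : Prop :=
  ∀ i, E (ρ i) (ρ (i + 1))

/-- Energy level of the prefix of length `n` of `ρ`. -/
def EL (w : Q → Q → ℤ) (ρ : ℕ → Q) (n : ℕ) : ℤ :=
  ∑ i ∈ Finset.range n, w (ρ i) (ρ (i + 1))

/-- Energy condition with initial credit `c₀`. -/
def EnergyCond (w : Q → Q → ℤ) (c₀ : ℕ) (ρ : ℕ → Q) : Prop :=
  ∀ n, 0 ≤ (c₀ : ℤ) + EL w ρ n

/-- The state `q` occurs infinitely often in `ρ`. -/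
def InfOften (ρ : ℕ → Q) (q : Q) : Prop :=
  ∀ N, ∃ n, N ≤ n ∧ ρ n = q

/-- Parity condition: the minimum priority occurring infinitely often is even. -/
def ParityCond (p : Q → ℕ) (ρ : ℕ → Q) : Prop :=
  ∃ q, InfOften ρ q ∧ Even (p q) ∧ ∀ q', InfOften ρ q' → p q ≤ p q'

/-- In the ladder game on `{0,…,n−1}` (edges `(i,i+1)` and `(i+1,i)` of
weight `−W`, self-loop at `n−1` of weight `1`, priority `0` at state `0` and `1`
elsewhere), every play from state `0` satisfying the parity condition and the energy
condition with initial credit `c₀` requires `c₀ ≥ (n−1)·W`. -/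
theorem stmt1 (n W : ℕ) (hn : 2 ≤ n) (hW : 1 ≤ W)
    (E : Fin n → Fin n → Prop)
    (hE : ∀ i j, E i j ↔
      ((i : ℕ) + 1 = (j : ℕ) ∨ (j : ℕ) + 1 = (i : ℕ) ∨
        ((i : ℕ) = n - 1 ∧ (j : ℕ) = n - 1)))
    (w : Fin n → Fin n → ℤ)
    (hw : ∀ i j, w i j = if i = j then 1 else -(W : ℤ))
    (p : Fin n → ℕ)
    (hp : ∀ i, p i = if (i : ℕ) = 0 then 0 else 1)
    (ρ : ℕ → Fin n) (h0 : (ρ 0 : ℕ) = 0) (hplay : IsPlay E ρ)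
    (c₀ : ℕ) (hpar : ParityCond p ρ) (hen : EnergyCond w c₀ ρ) :
    (n - 1) * W ≤ c₀ := by
  -- Each step moves the state index by at most one, so `ρ i ≤ i`.
  have hle : ∀ i, (ρ i : ℕ) ≤ i := by
    intro i
    induction i with
    | zero => omega
    | succ i ih =>
      have h := (hE _ _).mp (hplay i)
      rcases h with h | h | ⟨h1, h2⟩ <;> omega
  -- For `i < n - 1`, the step is not the self-loop, hence has weight `-W`.
  have hstep : ∀ i, i < n - 1 → w (ρ i) (ρ (i + 1)) = -(W : ℤ) := by
    intro i hi
    rw [hw]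
    have h := (hE _ _).mp (hplay i)
    have hne : ρ i ≠ ρ (i + 1) := by
      intro heq
      have hv : (ρ i : ℕ) = (ρ (i + 1) : ℕ) := by rw [heq]
      have := hle i
      rcases h with h | h | ⟨h1, h2⟩ <;> omega
    simp [hne]
  have hEL : EL w ρ (n - 1) = -((n - 1 : ℕ) * W : ℕ) := by
    unfold EL
    rw [Finset.sum_congr rfl (fun i hi => hstep i (Finset.mem_range.mp hi))]
    rw [Finset.sum_const, Finset.card_range]
    push_cast
    ring
  have := hen (n - 1)
  rw [hEL] at this
  have : ((n - 1) * W : ℕ) ≤ (c₀ : ℤ) := by omega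
  exact_mod_cast this
end

section
/- Let n ≥ 2 and W ≥ 1 be integers, and consider the player-1 energy parity game with states Q = {0,1,…,n−1} (all belonging to player 1), edges (i,i+1) and (i+1,i) for 0 ≤ i ≤ n−2 each of weight −W, a self-loop (n−1,n−1) of weight 1, priority 0 for state 0 and priority 1 for all other states. Then every finite-memory strategy of memory size m that is winning from state 0 for the energy parity objective with some finite initial credit satisfies m ≥ 2·(n−1)·W + 1. -/
variable {Q : Type*}

/-- Memory state of the transducer after reading `ρ 0, …, ρ (i-1)`. -/
def MemRun {M : Type*} (αu : M → Q → M) (m₀ : M) (ρ : ℕ → Q) : ℕ → M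
  | 0 => m₀
  | i + 1 => αu (MemRun αu m₀ ρ i) (ρ i)

/-- An outcome of the finite-memory strategy given by the transducer `⟨M, m₀, αu, αn⟩`. -/
def TransOutcome {M : Type*} (Q1 : Set Q) (E : Q → Q → Prop)
    (αu : M → Q → M) (αn : M → Q → Q) (m₀ : M) (q₀ : Q) (ρ : ℕ → Q) : Prop :=
  ρ 0 = q₀ ∧ IsPlay E ρ ∧
    ∀ i, ρ i ∈ Q1 → ρ (i + 1) = αn (MemRun αu m₀ ρ i) (ρ i)

lemma aux_changes (v : ℕ → ℕ)
    (h : ∀ t, v (t+1) = v t ∨ v (t+1) = v t + 1 ∨ v t = v (t+1) + 1)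
    (a : ℕ) : ∀ d : ℕ,
    v (a + d) ≤ v a + ((Finset.Ico a (a+d)).filter (fun t => v (t+1) ≠ v t)).card ∧
    v a ≤ v (a + d) + ((Finset.Ico a (a+d)).filter (fun t => v (t+1) ≠ v t)).card := by
  classical
  intro d
  induction d with
  | zero => simp
  | succ d ih =>
    have hrw : a + (d+1) = (a+d)+1 := by omega
    rw [hrw, Nat.Ico_succ_right_eq_insert_Ico (by omega), Finset.filter_insert]
    have hstep := h (a+d)
    by_cases hc : v ((a+d)+1) ≠ v (a+d)
    · rw [if_pos hc, Finset.card_insert_of_notMem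
        (fun hmem => (by simp at hmem : ¬ (a+d < a+d)) (by
          have := (Finset.mem_filter.mp hmem).1
          simpa using (Finset.mem_Ico.mp this).2))]
      omega
    · rw [if_neg hc]
      push_neg at hc
      omega

/-- In the ladder game (a player-1 game, so `Q1 = Set.univ`), every
finite-memory strategy (given by a transducer with memory set `M`) winning from
state `0` for the energy parity objective with some finite initial credit has
memory size at least `2·(n−1)·W + 1`. -/
theorem stmt2 (n W : ℕ) (hn : 2 ≤ n) (hW : 1 ≤ W)
    (E : Fin n → Fin n → Prop)
    (hE : ∀ i j, E i j ↔
      ((i : ℕ) + 1 = (j : ℕ) ∨ (j : ℕ) + 1 = (i : ℕ) ∨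
        ((i : ℕ) = n - 1 ∧ (j : ℕ) = n - 1)))
    (w : Fin n → Fin n → ℤ)
    (hw : ∀ i j, w i j = if i = j then 1 else -(W : ℤ))
    (p : Fin n → ℕ)
    (hp : ∀ i, p i = if (i : ℕ) = 0 then 0 else 1)
    (M : Type*) [Fintype M] (m₀ : M) (αu : M → Fin n → M) (αn : M → Fin n → Fin n)
    (hvalid : ∀ m q, E q (αn m q))
    (q₀ : Fin n) (hq₀ : (q₀ : ℕ) = 0)
    (hwin : ∃ c₀ : ℕ, ∀ ρ, TransOutcome (Set.univ : Set (Fin n)) E αu αn m₀ q₀ ρ →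
      ParityCond p ρ ∧ EnergyCond w c₀ ρ) :
    2 * (n - 1) * W + 1 ≤ Fintype.card M := by
  classical
  obtain ⟨c₀, hwin⟩ := hwin
  set F : M × Fin n → M × Fin n := fun x => (αu x.1 x.2, αn x.1 x.2) with hF
  set s : ℕ → M × Fin n := fun i => F^[i] (m₀, q₀) with hs
  set ρ : ℕ → Fin n := fun i => (s i).2 with hρ
  have hiter : ∀ i j : ℕ, s (i + j) = F^[j] (s i) := by
    intro i j
    simp only [hs, ← Function.iterate_add_apply]
    congr 1
    omega
  have hsucc : ∀ i, s (i + 1) = F (s i) := by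
    intro i
    simp only [hs, Function.iterate_succ_apply']
  have hρdef : ∀ i, ρ i = (s i).2 := fun i => rfl
  have hmem : ∀ i, MemRun αu m₀ ρ i = (s i).1 := by
    intro i
    induction i with
    | zero => simp [MemRun, hs]
    | succ i ih =>
      rw [MemRun, ih, hρdef, hsucc i]
  have hρsucc : ∀ i, ρ (i + 1) = αn (s i).1 (s i).2 := by
    intro i
    rw [hρdef, hsucc i]
  have houtcome : TransOutcome (Set.univ : Set (Fin n)) E αu αn m₀ q₀ ρ := by
    refine ⟨by simp [hρdef, hs], fun i => ?_, fun i _ => ?_⟩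
    · rw [hρsucc i]; exact hvalid _ _
    · rw [hρsucc i, hmem i]
  obtain ⟨hpar, hen⟩ := hwin ρ houtcome
  -- pigeonhole
  obtain ⟨a, b, hab', hsab⟩ : ∃ a b : ℕ, a < b ∧ s a = s b := by
    obtain ⟨a, b, hne, hab⟩ := Finite.exists_ne_map_eq_of_infinite s
    rcases lt_or_gt_of_ne hne with h | h
    exacts [⟨a, b, h, hab⟩, ⟨b, a, h, hab.symm⟩]
  -- parity: state with value 0 visited infinitely often
  obtain ⟨q', hIO, hEv, -⟩ := hpar
  have hq' : (q' : ℕ) = 0 := by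
    by_contra h
    rw [hp q', if_neg h] at hEv
    simpa using hEv
  obtain ⟨m, ham, hρm⟩ := hIO a
  have hperb : Function.IsPeriodicPt F (b - a) (s a) := by
    have h1 := hiter a (b - a)
    rw [show a + (b - a) = b by omega] at h1
    exact (h1.symm.trans hsab.symm)
  have hperm : Function.IsPeriodicPt F (b - a) (s m) := by
    have h2 := hperb.apply_iterate (m - a)
    rwa [← hiter a (m - a), show a + (m - a) = m by omega] at h2
  set x := s m with hx
  set T := Function.minimalPeriod F x with hT
  have hTpos : 0 < T := hperm.minimalPeriod_pos (by omega)
  have hperT : Function.IsPeriodicPt F T x := Function.isPeriodicPt_minimalPeriod F x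
  set y : ℕ → M × Fin n := fun t => F^[t] x with hy
  have hysm : ∀ t, y t = s (m + t) := fun t => (hiter m t).symm
  have hyT : ∀ t, y (t + T) = y t := by
    intro t
    have hTeq : F^[T] x = x := hperT
    simp only [hy]
    rw [Function.iterate_add_apply, hTeq]
  have hyTmul : ∀ t j, y (t + j * T) = y t := by
    intro t j
    induction j with
    | zero => simp
    | succ j ih =>
      rw [show t + (j+1) * T = (t + j * T) + T by ring, hyT, ih]
  have hρy : ∀ t, ρ (m + t) = (y t).2 := by
    intro t
    rw [hρdef, hysm t]
  have hynext : ∀ t, y (t + 1) = F (y t) := by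
    intro t
    simp only [hy, Function.iterate_succ_apply']
  have hedge : ∀ t, E (y t).2 (y (t + 1)).2 := by
    intro t
    rw [hynext t]
    exact hvalid _ _
  -- classification of edges along the run
  have hclass : ∀ t, ((y t).2 = (y (t+1)).2 ∧ ((y t).2 : ℕ) = n - 1)
      ∨ ((y t).2 ≠ (y (t+1)).2 ∧
          (((y (t+1)).2 : ℕ) = ((y t).2 : ℕ) + 1 ∨ ((y t).2 : ℕ) = ((y (t+1)).2 : ℕ) + 1)) := by
    intro t
    have h := (hE _ _).1 (hedge t)
    by_cases heq : (y t).2 = (y (t+1)).2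
    · left
      refine ⟨heq, ?_⟩
      have hval : ((y t).2 : ℕ) = ((y (t+1)).2 : ℕ) := by rw [heq]
      rcases h with h | h | h
      · omega
      · omega
      · exact h.1
    · right
      refine ⟨heq, ?_⟩
      rcases h with h | h | h
      · exact Or.inl h.symm
      · exact Or.inr h.symm
      · exact absurd (Fin.ext (by omega) : (y t).2 = (y (t+1)).2) heq
  set e : ℕ → ℤ := fun t => w ((y t).2) ((y (t+1)).2) with he
  set S : ℤ := ∑ t ∈ Finset.range T, e t with hS_def
  -- periodic sum decomposition
  have hEL : ∀ j : ℕ, EL w ρ (m + j * T) = EL w ρ m + j * S := by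
    intro j
    induction j with
    | zero => simp
    | succ j ih =>
      rw [show m + (j+1) * T = (m + j * T) + T by ring]
      rw [EL, Finset.sum_range_add, ← EL, ih]
      have hblock : ∀ t ∈ Finset.range T,
          w (ρ (m + j * T + t)) (ρ (m + j * T + t + 1)) = e t := by
        intro t _
        rw [show m + j * T + t + 1 = m + ((t + 1) + j * T) by ring,
            show m + j * T + t = m + (t + j * T) by ring,
            hρy _, hρy _, hyTmul, hyTmul]
      rw [Finset.sum_congr rfl hblock]
      push_cast
      ring
  -- S is nonnegative
  have hS : 0 ≤ S := by
    by_contra hneg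
    push_neg at hneg
    have hS1 : S ≤ -1 := by omega
    set j : ℕ := c₀ + (EL w ρ m).natAbs + 1 with hj
    have h1 := hen (m + j * T)
    rw [hEL j] at h1
    have h2 : (j : ℤ) * S ≤ (j : ℤ) * (-1) :=
      mul_le_mul_of_nonneg_left hS1 (by positivity)
    have h3 : EL w ρ m ≤ ((EL w ρ m).natAbs : ℤ) := Int.le_natAbs
    have hjc : (j : ℤ) = (c₀ : ℤ) + ((EL w ρ m).natAbs : ℤ) + 1 := by
      rw [hj]; push_cast; ring
    linarith
  -- loop edges and their count
  set Lp := (Finset.range T).filter (fun t => (y t).2 = (y (t+1)).2) with hLp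
  set k := Lp.card with hk
  set Cset := (Finset.range T).filter (fun t => ¬ (y t).2 = (y (t+1)).2) with hCset
  set C := Cset.card with hC
  have hkC : k + C = T := by
    have h := Finset.card_filter_add_card_filter_not
      (s := Finset.range T) (p := fun t => (y t).2 = (y (t+1)).2)
    rw [hk, hC, hLp, hCset]
    simpa using h
  -- compute S
  have hSval : S = (k : ℤ) - (C : ℤ) * W := by
    have hsum := Finset.sum_filter_add_sum_filter_not (Finset.range T)
      (fun t => (y t).2 = (y (t+1)).2) e
    have h1 : ∑ t ∈ Lp, e t = (k : ℤ) := by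
      calc ∑ t ∈ Lp, e t = ∑ t ∈ Lp, (1 : ℤ) := by
            refine Finset.sum_congr rfl (fun t ht => ?_)
            rw [hLp] at ht
            have hteq := (Finset.mem_filter.mp ht).2
            simp only [he]
            rw [hw, if_pos hteq]
        _ = (k : ℤ) := by rw [Finset.sum_const, hk]; simp
    have h2 : ∑ t ∈ Cset, e t = (C : ℤ) * (-(W:ℤ)) := by
      calc ∑ t ∈ Cset, e t = ∑ t ∈ Cset, (-(W:ℤ)) := by
            refine Finset.sum_congr rfl (fun t ht => ?_)
            rw [hCset] at ht
            have htne := (Finset.mem_filter.mp ht).2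
            simp only [he]
            rw [hw, if_neg htne]
        _ = (C : ℤ) * (-(W:ℤ)) := by rw [Finset.sum_const, hC]; simp [mul_comm]
    rw [hS_def, ← hsum, ← hLp, ← hCset, h1, h2]
    ring
  have hCWk : (C : ℤ) * W ≤ (k : ℤ) := by rw [hSval] at hS; linarith
  have hk1 : 1 ≤ k := by
    rcases Nat.eq_zero_or_pos k with h0 | h1
    · exfalso
      have hCT : C = T := by omega
      have hpos : 1 ≤ C * W := Nat.mul_pos (by omega) (by omega)
      have hposZ : (1 : ℤ) ≤ (C : ℤ) * W := by exact_mod_cast hpos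
      rw [h0] at hCWk
      simp at hCWk
      linarith
    · exact h1
  -- a position at state n-1
  obtain ⟨t₁, ht₁Lp⟩ : Lp.Nonempty := Finset.card_pos.mp (by omega)
  have ht₁mem : t₁ ∈ (Finset.range T).filter (fun t => (y t).2 = (y (t+1)).2) := by
    rw [← hLp]; exact ht₁Lp
  have ht₁T : t₁ < T := Finset.mem_range.mp (Finset.mem_filter.mp ht₁mem).1
  have ht₁v : ((y t₁).2 : ℕ) = n - 1 := by
    rcases hclass t₁ with ⟨_, hv⟩ | ⟨hne, _⟩
    · exact hv
    · exact absurd (Finset.mem_filter.mp ht₁mem).2 hne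
  -- the value function
  set vv : ℕ → ℕ := fun t => ((y t).2 : ℕ) with hvv
  have hvstep : ∀ t, vv (t+1) = vv t ∨ vv (t+1) = vv t + 1 ∨ vv t = vv (t+1) + 1 := by
    intro t
    rcases hclass t with ⟨heq, _⟩ | ⟨_, h | h⟩
    · left; simp only [hvv]; rw [heq]
    · right; left; exact h
    · right; right; exact h
  have hy0 : (y 0).2 = q' := by
    rw [hysm 0, Nat.add_zero, ← hρdef]
    exact hρm
  have hvv0 : vv 0 = 0 := by
    simp only [hvv]
    rw [hy0, hq']
  have hTy : y T = y 0 := by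
    have h := hyT 0
    simpa using h
  have hvvT : vv T = 0 := by
    simp only [hvv]
    rw [hTy, hy0, hq']
  have hvt₁ : vv t₁ = n - 1 := ht₁v
  -- count changes in the two halves
  have hch1 := (aux_changes vv hvstep 0 t₁).1
  have hch2 := (aux_changes vv hvstep t₁ (T - t₁)).2
  rw [Nat.zero_add] at hch1
  rw [show t₁ + (T - t₁) = T by omega] at hch2
  have hn1a : n - 1 ≤ ((Finset.Ico 0 t₁).filter (fun t => vv (t+1) ≠ vv t)).card := by
    omega
  have hn1b : n - 1 ≤ ((Finset.Ico t₁ T).filter (fun t => vv (t+1) ≠ vv t)).card := by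
    omega
  have hunion : ((Finset.Ico 0 t₁).filter (fun t => vv (t+1) ≠ vv t)) ∪
      ((Finset.Ico t₁ T).filter (fun t => vv (t+1) ≠ vv t)) =
      (Finset.range T).filter (fun t => vv (t+1) ≠ vv t) := by
    rw [← Finset.filter_union,
      Finset.Ico_union_Ico_eq_Ico (Nat.zero_le t₁) (le_of_lt ht₁T), ← Finset.range_eq_Ico]
  have hdisj : Disjoint ((Finset.Ico 0 t₁).filter (fun t => vv (t+1) ≠ vv t))
      ((Finset.Ico t₁ T).filter (fun t => vv (t+1) ≠ vv t)) :=
    Finset.disjoint_filter_filter (Finset.Ico_disjoint_Ico_consecutive 0 t₁ T)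
  have hCeq : (Finset.range T).filter (fun t => vv (t+1) ≠ vv t) = Cset := by
    rw [hCset]
    refine Finset.filter_congr (fun t _ => ?_)
    simp only [hvv, ne_eq]
    constructor
    · intro h1 h2; exact h1 (by rw [h2])
    · intro h1 h2; exact h1 (Fin.ext h2.symm)
  have hcardun : ((Finset.Ico 0 t₁).filter (fun t => vv (t+1) ≠ vv t)).card +
      ((Finset.Ico t₁ T).filter (fun t => vv (t+1) ≠ vv t)).card = C := by
    rw [hC, ← hCeq, ← hunion, Finset.card_union_of_disjoint hdisj]
  have hC2 : 2 * (n - 1) ≤ C := by omega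
  have hkbound : 2 * (n - 1) * W ≤ k := by
    have hmul : 2 * (n - 1) * W ≤ C * W := Nat.mul_le_mul_right W hC2
    have hCk : C * W ≤ k := by exact_mod_cast hCWk
    omega
  -- positions at state n-1 within one period
  set A := (Finset.range T).filter (fun t => ((y t).2 : ℕ) = n - 1) with hA
  have hLpA : Lp ⊆ A := by
    intro t ht
    rw [hLp] at ht
    have hm := Finset.mem_filter.mp ht
    rw [hA]
    rcases hclass t with ⟨_, hv⟩ | ⟨hne, _⟩
    · exact Finset.mem_filter.mpr ⟨hm.1, hv⟩
    · exact absurd hm.2 hne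
  have hAne : A.Nonempty := ⟨t₁, hLpA ht₁Lp⟩
  set t₂ := A.max' hAne with ht₂def
  have ht₂A : t₂ ∈ A := A.max'_mem hAne
  have ht₂m : t₂ ∈ Finset.range T ∧ ((y t₂).2 : ℕ) = n - 1 := by
    rw [hA] at ht₂A
    exact Finset.mem_filter.mp ht₂A
  have ht₂T : t₂ < T := Finset.mem_range.mp ht₂m.1
  have ht₂notLp : t₂ ∉ Lp := by
    intro hmem
    rw [hLp] at hmem
    have heq := (Finset.mem_filter.mp hmem).2
    have hv1 : ((y (t₂+1)).2 : ℕ) = n - 1 := by rw [← heq]; exact ht₂m.2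
    by_cases hcase : t₂ + 1 = T
    · have hv0 : ((y (t₂+1)).2 : ℕ) = 0 := by
        rw [hcase, hTy, hy0, hq']
      omega
    · have hlt : t₂ + 1 < T := by omega
      have hA1 : t₂ + 1 ∈ A := by
        rw [hA]
        exact Finset.mem_filter.mpr ⟨Finset.mem_range.mpr hlt, hv1⟩
      have hle := A.le_max' _ hA1
      rw [← ht₂def] at hle
      omega
  have hcardA : k + 1 ≤ A.card := by
    have hsub : insert t₂ Lp ⊆ A := Finset.insert_subset ht₂A hLpA
    have hcard := Finset.card_le_card hsub
    rw [Finset.card_insert_of_notMem ht₂notLp] at hcard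
    omega
  -- memory states at those positions are pairwise distinct
  have hinj : Set.InjOn (fun t => (y t).1) (A : Set ℕ) := by
    intro t ht t' ht' hEq
    have hmt : t ∈ Finset.range T ∧ ((y t).2 : ℕ) = n - 1 := by
      rw [hA] at ht; exact Finset.mem_filter.mp (Finset.mem_coe.mp ht)
    have hmt' : t' ∈ Finset.range T ∧ ((y t').2 : ℕ) = n - 1 := by
      rw [hA] at ht'; exact Finset.mem_filter.mp (Finset.mem_coe.mp ht')
    have hv : ((y t).2 : ℕ) = ((y t').2 : ℕ) := by rw [hmt.2, hmt'.2]
    have hyy : y t = y t' := Prod.ext hEq (Fin.ext hv)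
    exact Function.iterate_injOn_Iio_minimalPeriod
      (Finset.mem_range.mp hmt.1) (Finset.mem_range.mp hmt'.1) hyy
  have hcardM : A.card ≤ Fintype.card M := by
    rw [← Finset.card_univ]
    exact Finset.card_le_card_of_injOn (fun t => (y t).1) (fun _ _ => Finset.mem_univ _) hinj
  omega
end

section
/- Let G be an energy parity game, and for each state q from which player 1 wins let v(q) ∈ ℕ be the minimum initial credit in q. Let σ be an optimal strategy for player 1 in a winning state q₀ (i.e., σ is winning from q₀ with initial credit v(q₀)). Then for every Δ ≥ 0, every outcome ρ of σ from q₀, and every position n of ρ, the state q = ρₙ is a winning state and the energy level v(q₀) + Δ + EL(w,ρ(n)) at that position is at least v(q) + Δ. -/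
variable {Q : Type*}

/-- The history `ρ 0, …, ρ (i-1)` as a list. -/
def Hist (ρ : ℕ → Q) (i : ℕ) : List Q :=
  (List.range i).map ρ

/-- A (general, history-dependent) strategy for player 1: at every history ending in a
player-1 state `q` it proposes a successor of `q`. -/
def IsStrategy (Q1 : Set Q) (E : Q → Q → Prop) (σ : List Q → Q → Q) : Prop :=
  ∀ h q, q ∈ Q1 → E q (σ h q)

/-- An outcome of strategy `σ` from `q₀`. -/
def IsOutcome (Q1 : Set Q) (E : Q → Q → Prop) (σ : List Q → Q → Q) (q₀ : Q)
    (ρ : ℕ → Q) : Prop :=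
  ρ 0 = q₀ ∧ IsPlay E ρ ∧ ∀ i, ρ i ∈ Q1 → ρ (i + 1) = σ (Hist ρ i) (ρ i)

/-- Player 1 wins the energy parity game from `q₀` (with some finite initial credit). -/
def Player1Wins (Q1 : Set Q) (E : Q → Q → Prop) (p : Q → ℕ) (w : Q → Q → ℤ)
    (q₀ : Q) : Prop :=
  ∃ σ c₀, IsStrategy Q1 E σ ∧
    ∀ ρ, IsOutcome Q1 E σ q₀ ρ → ParityCond p ρ ∧ EnergyCond w c₀ ρ

/-- if `v q` is the minimum initial credit at every winning state `q` and
`σ` is an optimal strategy from the winning state `q₀`, then for every `Δ ≥ 0`, along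
every outcome `ρ` of `σ` from `q₀` with initial credit `v q₀ + Δ`, every visited state
`ρ n` is winning and the energy level `v q₀ + Δ + EL(w, ρ(n))` at that position is at
least `v (ρ n) + Δ`. -/
theorem stmt3 {Q : Type*} [Fintype Q] (Q1 : Set Q) (E : Q → Q → Prop)
    (hE : ∀ q, ∃ q', E q q') (p : Q → ℕ) (w : Q → Q → ℤ)
    (v : Q → ℕ)
    (hv : ∀ q, Player1Wins Q1 E p w q →
      IsLeast {c : ℕ | ∃ σ, IsStrategy Q1 E σ ∧
        ∀ ρ, IsOutcome Q1 E σ q ρ → ParityCond p ρ ∧ EnergyCond w c ρ} (v q))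
    (q₀ : Q) (hq₀ : Player1Wins Q1 E p w q₀)
    (σ : List Q → Q → Q) (hσ : IsStrategy Q1 E σ)
    (hopt : ∀ ρ, IsOutcome Q1 E σ q₀ ρ → ParityCond p ρ ∧ EnergyCond w (v q₀) ρ)
    (Δ : ℕ) (ρ : ℕ → Q) (hρ : IsOutcome Q1 E σ q₀ ρ) (n : ℕ) :
    Player1Wins Q1 E p w (ρ n) ∧
      (v (ρ n) : ℤ) + (Δ : ℤ) ≤ (v q₀ : ℤ) + (Δ : ℤ) + EL w ρ n := by
  have hmain := hopt ρ hρ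
  obtain ⟨h0, hplay, hcons⟩ := hρ
  have hEn : (0:ℤ) ≤ (v q₀ : ℤ) + EL w ρ n := hmain.2 n
  set c : ℕ := ((v q₀ : ℤ) + EL w ρ n).toNat with hc
  have hcZ : (c : ℤ) = (v q₀ : ℤ) + EL w ρ n := Int.toNat_of_nonneg hEn
  set σ' : List Q → Q → Q := fun h q => σ (Hist ρ n ++ h) q with hσ'def
  have hσ' : IsStrategy Q1 E σ' := fun h q hq => hσ _ q hq
  have key : ∀ ρ', IsOutcome Q1 E σ' (ρ n) ρ' →
      ParityCond p ρ' ∧ EnergyCond w c ρ' := by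
    rintro ρ' ⟨h0', hplay', hcons'⟩
    set ρ'' : ℕ → Q := fun k => if k < n then ρ k else ρ' (k - n) with hρ''def
    have h1 : ∀ k, ρ'' (n + k) = ρ' k := by
      intro k
      have hnk : ¬ (n + k < n) := by omega
      simp [hρ''def, hnk]
    have h2 : ∀ k, k ≤ n → ρ'' k = ρ k := by
      intro k hk
      rcases lt_or_eq_of_le hk with h | h
      · simp [hρ''def, h]
      · subst h
        have hnk : ¬ (k < k) := lt_irrefl k
        simp [hρ''def, hnk, h0']
    have histeq : ∀ m, m ≤ n → Hist ρ'' m = Hist ρ m := by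
      intro m hm
      unfold Hist
      apply List.map_congr_left
      intro a ha
      exact h2 a (le_of_lt (lt_of_lt_of_le (List.mem_range.mp ha) hm))
    have histadd : ∀ m, Hist ρ'' (n + m) = Hist ρ n ++ Hist ρ' m := by
      intro m
      unfold Hist
      rw [List.range_add, List.map_append]
      congr 1
      · exact histeq n le_rfl
      · rw [List.map_map]
        apply List.map_congr_left
        intro a _
        exact h1 a
    have hout'' : IsOutcome Q1 E σ q₀ ρ'' := by
      refine ⟨(h2 0 (Nat.zero_le n)).trans h0, ?_, ?_⟩
      · intro i
        by_cases hi : i + 1 ≤ n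
        · rw [h2 i (by omega), h2 (i+1) hi]
          exact hplay i
        · obtain ⟨j, rfl⟩ : ∃ j, i = n + j := ⟨i - n, by omega⟩
          rw [show n + j + 1 = n + (j + 1) from by omega, h1, h1]
          exact hplay' j
      · intro i hi
        by_cases hin : i + 1 ≤ n
        · rw [h2 i (by omega)] at hi ⊢
          rw [h2 (i+1) hin, histeq i (by omega)]
          exact hcons i hi
        · obtain ⟨j, rfl⟩ : ∃ j, i = n + j := ⟨i - n, by omega⟩
          rw [h1] at hi ⊢
          rw [show n + j + 1 = n + (j + 1) from by omega, h1, histadd]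
          exact hcons' j hi
    have ELeq : EL w ρ'' n = EL w ρ n := by
      unfold EL
      apply Finset.sum_congr rfl
      intro i hi
      have hi' := Finset.mem_range.mp hi
      rw [h2 i (by omega), h2 (i+1) (by omega)]
    have ELadd : ∀ m, EL w ρ'' (n + m) = EL w ρ n + EL w ρ' m := by
      intro m
      induction m with
      | zero => simpa [EL] using ELeq
      | succ m ih =>
        rw [show n + (m + 1) = (n + m) + 1 from by omega]
        unfold EL at ih ⊢
        rw [Finset.sum_range_succ, Finset.sum_range_succ, ih,
          show n + m + 1 = n + (m + 1) from rfl, h1, h1]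
        ring
    have hmain'' := hopt ρ'' hout''
    constructor
    · obtain ⟨q, hq1, hq2, hq3⟩ := hmain''.1
      refine ⟨q, ?_, hq2, ?_⟩
      · intro N
        obtain ⟨m, hm, hmq⟩ := hq1 (n + N)
        refine ⟨m - n, by omega, ?_⟩
        rw [← h1 (m - n), show n + (m - n) = m from by omega]
        exact hmq
      · intro q' hq'
        apply hq3
        intro N
        obtain ⟨m, _, hmq⟩ := hq' N
        exact ⟨n + m, by omega, by rw [h1]; exact hmq⟩
    · intro m
      have h := hmain''.2 (n + m)
      rw [ELadd m] at h
      rw [hcZ]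
      linarith
  have hwin : Player1Wins Q1 E p w (ρ n) := ⟨σ', c, hσ', key⟩
  have hle : v (ρ n) ≤ c := (hv (ρ n) hwin).2 ⟨σ', hσ', key⟩
  refine ⟨hwin, ?_⟩
  have : (v (ρ n) : ℤ) ≤ (c : ℤ) := by exact_mod_cast hle
  rw [hcZ] at this
  linarith
end

section
/- Memoryless strategies are sufficient for player 1 to win energy coBüchi games: if in an energy parity game with priority function p : Q → {1,2}, n states, and largest absolute weight W ≥ 1, player 1 wins from a state q (with some finite initial credit), then player 1 has a memoryless strategy that is winning from q with initial credit (n−1)·W. -/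
variable {Q : Type*}

/-- An outcome of the memoryless player-1 strategy `σ` from `q₀`. -/
def MemlessOutcome (Q1 : Set Q) (E : Q → Q → Prop) (σ : Q → Q) (q₀ : Q)
    (ρ : ℕ → Q) : Prop :=
  ρ 0 = q₀ ∧ IsPlay E ρ ∧ ∀ i, ρ i ∈ Q1 → ρ (i + 1) = σ (ρ i)

/-- The minimal priority on the cycle `ρ i, …, ρ (i+k)` is even. -/
def MinPrioEven (p : Q → ℕ) (ρ : ℕ → Q) (i k : ℕ) : Prop :=
  ∃ j ∈ Finset.Icc i (i + k), Even (p (ρ j)) ∧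
    ∀ l ∈ Finset.Icc i (i + k), p (ρ j) ≤ p (ρ l)

/-- The memoryless strategy `σ` is good-for-energy in `q`: every cycle of every outcome
of `σ` from `q` has positive energy level, or zero energy level and even minimal
priority. -/
def GoodForEnergy (Q1 : Set Q) (E : Q → Q → Prop) (p : Q → ℕ) (w : Q → Q → ℤ)
    (σ : Q → Q) (q : Q) : Prop :=
  ∀ ρ, MemlessOutcome Q1 E σ q ρ → ∀ i k, 0 < k → ρ i = ρ (i + k) →
    0 < ∑ j ∈ Finset.Ico i (i + k), w (ρ j) (ρ (j + 1)) ∨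
      (∑ j ∈ Finset.Ico i (i + k), w (ρ j) (ρ (j + 1)) = 0 ∧ MinPrioEven p ρ i k)

section AuxDev
open Classical
variable {Q : Type*} (Q1 : Set Q) (E : Q → Q → Prop) (p : Q → ℕ) (w : Q → Q → ℤ)

lemma Hist_zero (γ : ℕ → Q) : Hist γ 0 = [] := rfl

lemma Hist_congr {γ δ : ℕ → Q} {i : ℕ} (h : ∀ j < i, γ j = δ j) : Hist γ i = Hist δ i := by
  unfold Hist
  exact List.map_congr_left (fun a ha => h a (List.mem_range.mp ha))

lemma Hist_add (γ : ℕ → Q) (m j : ℕ) :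
    Hist γ (m + j) = Hist γ m ++ (List.range j).map (fun a => γ (m + a)) := by
  unfold Hist
  rw [List.range_add, List.map_append, List.map_map]
  rfl

/-- Prepend a state to an infinite sequence. -/
def prep (s : Q) (γ : ℕ → Q) : ℕ → Q := fun i => match i with
  | 0 => s
  | (j+1) => γ j

@[simp] lemma prep_zero (s : Q) (γ : ℕ → Q) : prep s γ 0 = s := rfl
@[simp] lemma prep_succ (s : Q) (γ : ℕ → Q) (j : ℕ) : prep s γ (j+1) = γ j := rfl

lemma Hist_prep (s : Q) (γ : ℕ → Q) (j : ℕ) :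
    Hist (prep s γ) (j + 1) = s :: Hist γ j := by
  unfold Hist
  rw [List.range_succ_eq_map, List.map_cons, List.map_map]
  rfl

lemma EL_congr {γ δ : ℕ → Q} {m : ℕ} (h : ∀ j ≤ m, γ j = δ j) : EL w γ m = EL w δ m := by
  unfold EL
  refine Finset.sum_congr rfl (fun i hi => ?_)
  have hi' := Finset.mem_range.mp hi
  rw [h i (le_of_lt hi'), h (i+1) hi']

lemma EL_add (γ : ℕ → Q) (m j : ℕ) :
    EL w γ (m + j) = EL w γ m + ∑ a ∈ Finset.range j, w (γ (m + a)) (γ (m + a + 1)) := by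
  unfold EL
  exact Finset.sum_range_add _ m j

@[simp] lemma EL_one (γ : ℕ → Q) : EL w γ 1 = w (γ 0) (γ 1) := by
  simp [EL]

lemma EL_prep (s : Q) (γ : ℕ → Q) (m : ℕ) :
    EL w (prep s γ) (m + 1) = w s (γ 0) + EL w γ m := by
  unfold EL
  rw [Finset.sum_range_succ']
  simp [prep, add_comm]

/-- A finite prefix of a play inside `C`, consistent with strategy `σ`, starting at `s`. -/
def FinPref (C : Set Q) (σ : List Q → Q → Q) (s : Q) (γ : ℕ → Q) (m : ℕ) : Prop :=
  γ 0 = s ∧ (∀ i < m, E (γ i) (γ (i+1)) ∧ γ (i+1) ∈ C) ∧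
    ∀ i < m, γ i ∈ Q1 → γ (i+1) = σ (Hist γ i) (γ i)

/-- A strategy valid inside `C`. -/
def ValidIn (C : Set Q) (σ : List Q → Q → Q) : Prop :=
  ∀ h x, x ∈ Q1 → E x (σ h x) ∧ (x ∈ C → σ h x ∈ C)

/-- Player 1 can, starting from `s` and with credit `c`, keep the energy nonnegative while
staying in `C` and never visiting a priority-1 state (after time 0). -/
def WinsSafe (C : Set Q) (s : Q) (c : ℕ) : Prop :=
  s ∈ C ∧ ∃ σ, ValidIn Q1 E C σ ∧ ∀ γ m, FinPref Q1 E C σ s γ m →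
    (0 ≤ (c : ℤ) + EL w γ m) ∧ ∀ i, 1 ≤ i → i ≤ m → p (γ i) ≠ 1

def SafeSet (C : Set Q) : Set Q := {s | ∃ c, WinsSafe Q1 E p w C s c}

noncomputable def vv (C : Set Q) (s : Q) : ℕ := sInf {c | WinsSafe Q1 E p w C s c}

lemma safe_succ {C : Set Q} {s : Q} {c : ℕ} {σ : List Q → Q → Q}
    (hsC : s ∈ C) (hval : ValidIn Q1 E C σ)
    (hγ : ∀ γ m, FinPref Q1 E C σ s γ m →
      (0 ≤ (c : ℤ) + EL w γ m) ∧ ∀ i, 1 ≤ i → i ≤ m → p (γ i) ≠ 1)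
    {t : Q} (hEt : E s t) (htC : t ∈ C) (hts : s ∈ Q1 → t = σ [] s) :
    p t ≠ 1 ∧ 0 ≤ (c : ℤ) + w s t ∧ WinsSafe Q1 E p w C t (c + w s t).toNat := by
  -- the two-element prefix [s, t]
  have hpref2 : FinPref Q1 E C σ s (prep s (fun _ => t)) 1 := by
    refine ⟨rfl, ?_, ?_⟩
    · intro i hi
      interval_cases i
      exact ⟨hEt, htC⟩
    · intro i hi hQ1
      interval_cases i
      simpa [Hist_zero] using hts hQ1
  obtain ⟨hen2, hsafe2⟩ := hγ _ 1 hpref2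
  have hptne : p t ≠ 1 := by simpa using hsafe2 1 le_rfl le_rfl
  have hen1 : 0 ≤ (c : ℤ) + w s t := by simpa using hen2
  refine ⟨hptne, hen1, htC, fun h x => σ (s :: h) x, ?_, ?_⟩
  · intro h x hx
    exact hval (s :: h) x hx
  · intro γ m hpm
    obtain ⟨hγ0, hedge, hcons⟩ := hpm
    have hδ : FinPref Q1 E C σ s (prep s γ) (m + 1) := by
      refine ⟨rfl, ?_, ?_⟩
      · intro i hi
        match i with
        | 0 => simpa [hγ0] using ⟨hEt, htC⟩
        | (j+1) => exact hedge j (by omega)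
      · intro i hi hQ1
        match i with
        | 0 =>
          simp only [prep_zero] at hQ1
          simpa [Hist_zero, hγ0] using hts hQ1
        | (j+1) =>
          have := hcons j (by omega) (by simpa using hQ1)
          simpa [Hist_prep] using this
    obtain ⟨hen, hsafe⟩ := hγ _ (m+1) hδ
    constructor
    · rw [EL_prep, hγ0] at hen
      have htn : (((c : ℤ) + w s t).toNat : ℤ) = (c : ℤ) + w s t := Int.toNat_of_nonneg hen1
      linarith
    · intro i h1 him
      have := hsafe (i+1) (by omega) (by omega)
      simpa using this

end AuxDev

section AuxDev2
open Classical
variable {Q : Type*} (Q1 : Set Q) (E : Q → Q → Prop) (p : Q → ℕ) (w : Q → Q → ℤ)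

lemma vv_mem {C : Set Q} {s : Q} (hs : s ∈ SafeSet Q1 E p w C) :
    WinsSafe Q1 E p w C s (vv Q1 E p w C s) := Nat.sInf_mem hs

lemma vv_le {C : Set Q} {s : Q} {c : ℕ} (h : WinsSafe Q1 E p w C s c) :
    vv Q1 E p w C s ≤ c := Nat.sInf_le h

/-- Greedy move for a player-1 state in the safe region. -/
lemma greedy1 {C : Set Q} {s : Q} (hs : s ∈ SafeSet Q1 E p w C) (hs1 : s ∈ Q1) :
    ∃ t, E s t ∧ p t ≠ 1 ∧ t ∈ SafeSet Q1 E p w C ∧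
      (vv Q1 E p w C t : ℤ) ≤ vv Q1 E p w C s + w s t := by
  obtain ⟨hsC, σ, hval, hγ⟩ := vv_mem Q1 E p w hs
  obtain ⟨hEt, htC⟩ := hval [] s hs1
  have h := safe_succ Q1 E p w hsC hval hγ hEt (htC hsC) (fun _ => rfl)
  refine ⟨σ [] s, hEt, h.1, ⟨_, h.2.2⟩, ?_⟩
  have h1 := vv_le Q1 E p w h.2.2
  have h2 : (((vv Q1 E p w C s : ℤ) + w s (σ [] s)).toNat : ℤ)
      = (vv Q1 E p w C s : ℤ) + w s (σ [] s) := Int.toNat_of_nonneg h.2.1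
  calc (vv Q1 E p w C (σ [] s) : ℤ) ≤ _ := Int.ofNat_le.mpr h1
  _ = _ := h2

/-- Any adversary move from a player-2 state in the safe region that stays in `C`. -/
lemma greedy2 {C : Set Q} {s : Q} (hs : s ∈ SafeSet Q1 E p w C) (hs1 : s ∉ Q1)
    {t : Q} (hEt : E s t) (htC : t ∈ C) :
    p t ≠ 1 ∧ t ∈ SafeSet Q1 E p w C ∧
      (vv Q1 E p w C t : ℤ) ≤ vv Q1 E p w C s + w s t := by
  obtain ⟨hsC, σ, hval, hγ⟩ := vv_mem Q1 E p w hs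
  have h := safe_succ Q1 E p w hsC hval hγ hEt htC (fun h1 => absurd h1 hs1)
  refine ⟨h.1, ⟨_, h.2.2⟩, ?_⟩
  have h1 := vv_le Q1 E p w h.2.2
  have h2 : (((vv Q1 E p w C s : ℤ) + w s t).toNat : ℤ)
      = (vv Q1 E p w C s : ℤ) + w s t := Int.toNat_of_nonneg h.2.1
  calc (vv Q1 E p w C t : ℤ) ≤ _ := Int.ofNat_le.mpr h1
  _ = _ := h2

lemma safeSet_subset {C : Set Q} : SafeSet Q1 E p w C ⊆ C := fun _ hs =>
  (vv_mem Q1 E p w hs).1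

/-- One step of the player-1 attractor computation (relative to subarena `C`;
escaping `C` counts as attracted). -/
def attrStep (C A : Set Q) : Set Q :=
  A ∪ {s | s ∈ C ∧ ((s ∈ Q1 ∧ ∃ t, E s t ∧ (t ∈ A ∨ t ∉ C)) ∨
    (s ∉ Q1 ∧ ∀ t, E s t → t ∈ C → t ∈ A))}

def attr (C : Set Q) : ℕ → Set Q
  | 0 => SafeSet Q1 E p w C
  | (r+1) => attrStep Q1 E C (attr C r)

def AA (C : Set Q) : Set Q := ⋃ r, attr Q1 E p w C r

def LL : ℕ → Set Q
  | 0 => ∅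
  | (k+1) => LL k ∪ AA Q1 E p w (LL k)ᶜ

lemma attr_subset_C {C : Set Q} : ∀ r, attr Q1 E p w C r ⊆ C
  | 0 => safeSet_subset Q1 E p w
  | (r+1) => by
      intro s hs
      rcases hs with h | h
      · exact attr_subset_C r h
      · exact h.1

lemma attr_mono {C : Set Q} {r r' : ℕ} (h : r ≤ r') :
    attr Q1 E p w C r ⊆ attr Q1 E p w C r' := by
  induction r' with
  | zero => simpa [Nat.le_zero.mp h]
  | succ n ih =>
    rcases Nat.lt_or_ge r (n+1) with h1 | h1
    · exact (ih (by omega)).trans (Set.subset_union_left)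
    · have : r = n + 1 := by omega
      subst this; rfl

lemma LL_mono_succ (k : ℕ) : LL Q1 E p w k ⊆ LL Q1 E p w (k+1) := Set.subset_union_left

lemma LL_mono {k k' : ℕ} (h : k ≤ k') : LL Q1 E p w k ⊆ LL Q1 E p w k' := by
  induction k' with
  | zero => simpa [Nat.le_zero.mp h]
  | succ n ih =>
    rcases Nat.lt_or_ge k (n+1) with h1 | h1
    · exact (ih (by omega)).trans (LL_mono_succ Q1 E p w n)
    · have : k = n + 1 := by omega
      subst this; rfl

lemma mem_LL_iff {k : ℕ} {s : Q} :
    s ∈ LL Q1 E p w k ↔ ∃ j < k, s ∈ AA Q1 E p w (LL Q1 E p w j)ᶜ := by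
  induction k with
  | zero => simp [LL]
  | succ n ih =>
    constructor
    · intro h
      rcases h with h | h
      · obtain ⟨j, hj, hj2⟩ := ih.mp h
        exact ⟨j, by omega, hj2⟩
      · exact ⟨n, by omega, h⟩
    · rintro ⟨j, hj, hj2⟩
      rcases Nat.lt_or_ge j n with h1 | h1
      · exact Or.inl (ih.mpr ⟨j, h1, hj2⟩)
      · have : j = n := by omega
        subst this
        exact Or.inr hj2

/-- A monotone sequence of sets in a finite type stabilizes at some point. -/
lemma exists_stab [Fintype Q] (g : ℕ → Set Q) (hg : ∀ k, g k ⊆ g (k+1)) :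
    ∃ k, g (k+1) = g k := by
  by_contra hc
  push_neg at hc
  have hcard : ∀ k, k ≤ (g k).ncard := by
    intro k
    induction k with
    | zero => omega
    | succ n ih =>
      have hlt : (g n).ncard < (g (n+1)).ncard :=
        Set.ncard_lt_ncard (Set.ssubset_iff_subset_ne.mpr ⟨hg n, fun he => hc n he.symm⟩)
          (Set.toFinite _)
      omega
  have := hcard (Fintype.card Q + 1)
  have hle : (g (Fintype.card Q + 1)).ncard ≤ Fintype.card Q := by
    have h2 := Set.ncard_le_ncard (Set.subset_univ (g (Fintype.card Q + 1))) (Set.toFinite _)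
    rwa [Set.ncard_univ, Nat.card_eq_fintype_card] at h2
  omega

end AuxDev2

section AuxDev3
open Classical
variable {Q : Type*} (Q1 : Set Q) (E : Q → Q → Prop) (p : Q → ℕ) (w : Q → Q → ℤ)

/-- The limit of a sequence of (function, length) prefixes. -/
def limSeq (f : ℕ → (ℕ → Q) × ℕ) : ℕ → Q := fun n => (f n).1 n

section Lim
variable {f : ℕ → (ℕ → Q) × ℕ} (hm : ∀ k, (f k).2 < (f (k+1)).2)
  (hag : ∀ k i, i ≤ (f k).2 → (f (k+1)).1 i = (f k).1 i)

include hm in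
lemma seq_mge : ∀ k, k ≤ (f k).2 := by
  intro k
  induction k with
  | zero => omega
  | succ n ih => have := hm n; omega

include hm in
lemma seq_m_mono : ∀ k d, (f k).2 ≤ (f (k+d)).2 := by
  intro k d
  induction d with
  | zero => exact le_rfl
  | succ n ih =>
    have := hm (k+n)
    rw [show k+(n+1) = (k+n)+1 by omega]
    omega

include hm hag in
lemma seq_agree : ∀ k d i, i ≤ (f k).2 → (f (k+d)).1 i = (f k).1 i := by
  intro k d
  induction d with
  | zero => intro i _; rfl
  | succ n ih =>
    intro i hi
    have h1 : i ≤ (f (k+n)).2 := le_trans hi (seq_m_mono hm k n)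
    have h2 := hag (k+n) i h1
    rw [show k + (n+1) = (k+n) + 1 by omega, h2, ih i hi]

include hm hag in
lemma limSeq_eq (k i : ℕ) (hi : i ≤ (f k).2) : limSeq f i = (f k).1 i := by
  unfold limSeq
  rcases le_total i k with h | h
  · obtain ⟨d, rfl⟩ := Nat.exists_eq_add_of_le h
    exact (seq_agree hm hag i d i (seq_mge hm i)).symm
  · obtain ⟨d, rfl⟩ := Nat.exists_eq_add_of_le h
    exact seq_agree hm hag k d _ hi

include hm hag in
lemma limit_outcome (σ : List Q → Q → Q) (q : Q) (hq : (f 0).1 0 = q)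
    (hInv : ∀ k, ∀ i < (f k).2, E ((f k).1 i) ((f k).1 (i+1)) ∧
      ((f k).1 i ∈ Q1 → (f k).1 (i+1) = σ (Hist ((f k).1) i) ((f k).1 i))) :
    IsOutcome Q1 E σ q (limSeq f) := by
  have key : ∀ i, E (limSeq f i) (limSeq f (i+1)) ∧
      (limSeq f i ∈ Q1 → limSeq f (i+1) = σ (Hist (limSeq f) i) (limSeq f i)) := by
    intro i
    have hk : i + 1 ≤ (f (i+1)).2 := seq_mge hm (i+1)
    have e1 : limSeq f i = (f (i+1)).1 i := limSeq_eq hm hag (i+1) i (by omega)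
    have e2 : limSeq f (i+1) = (f (i+1)).1 (i+1) := limSeq_eq hm hag (i+1) (i+1) hk
    have eh : Hist (limSeq f) i = Hist ((f (i+1)).1) i :=
      Hist_congr (fun j hj => limSeq_eq hm hag (i+1) j (by omega))
    have h := hInv (i+1) i (by omega)
    rw [e1, e2, eh]
    exact h
  refine ⟨?_, fun i => (key i).1, fun i hi => (key i).2 hi⟩
  have : limSeq f 0 = (f 0).1 0 := limSeq_eq hm hag 0 0 (by omega)
  rw [this, hq]

end Lim

/-- Any consistent finite prefix extends to an infinite outcome. -/
lemma extend_outcome (hE : ∀ x, ∃ t, E x t) (σ : List Q → Q → Q)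
    (hσ : IsStrategy Q1 E σ) (q : Q) (γ : ℕ → Q) (m : ℕ)
    (hγ0 : γ 0 = q) (hedge : ∀ i < m, E (γ i) (γ (i+1)))
    (hcons : ∀ i < m, γ i ∈ Q1 → γ (i+1) = σ (Hist γ i) (γ i)) :
    ∃ ρ, IsOutcome Q1 E σ q ρ ∧ ∀ i ≤ m, ρ i = γ i := by
  set nxt : (ℕ → Q) × ℕ → Q := fun x =>
    if h : x.1 x.2 ∈ Q1 then σ (Hist x.1 x.2) (x.1 x.2) else choose (hE (x.1 x.2)) with hnxt
  set T : (ℕ → Q) × ℕ → (ℕ → Q) × ℕ :=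
    fun x => (fun i => if i ≤ x.2 then x.1 i else nxt x, x.2 + 1) with hT
  set f : ℕ → (ℕ → Q) × ℕ := fun k => T^[k] (γ, m) with hf
  have hfs : ∀ k, f (k+1) = T (f k) := by
    intro k
    simp only [hf, Function.iterate_succ_apply']
  have hm : ∀ k, (f k).2 < (f (k+1)).2 := by
    intro k; rw [hfs k]; simp [hT]
  have hag : ∀ k i, i ≤ (f k).2 → (f (k+1)).1 i = (f k).1 i := by
    intro k i hi; rw [hfs k]; simp [hT, hi]
  have hInv : ∀ k, ((f k).1 0 = q) ∧ ∀ i < (f k).2, E ((f k).1 i) ((f k).1 (i+1)) ∧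
      ((f k).1 i ∈ Q1 → (f k).1 (i+1) = σ (Hist ((f k).1) i) ((f k).1 i)) := by
    intro k
    induction k with
    | zero => exact ⟨hγ0, fun i hi => ⟨hedge i hi, hcons i hi⟩⟩
    | succ n ih =>
      obtain ⟨ih0, ih1⟩ := ih
      constructor
      · rw [hag n 0 (by omega)]; exact ih0
      · intro i hi
        have hm2 : (f (n+1)).2 = (f n).2 + 1 := by rw [hfs n]
        have hlow : ∀ j ≤ (f n).2, (f (n+1)).1 j = (f n).1 j := hag n
        rcases Nat.lt_or_ge i (f n).2 with h1 | h1
        · rw [hlow i (by omega), hlow (i+1) (by omega),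
            Hist_congr (fun j hj => hlow j (by omega))]
          exact ih1 i h1
        · have hieq : i = (f n).2 := by omega
          subst hieq
          have hend : (f (n+1)).1 ((f n).2 + 1) = nxt (f n) := by
            rw [hfs n]; simp [hT]
          have hsame : (f (n+1)).1 (f n).2 = (f n).1 (f n).2 := hlow _ le_rfl
          have hh : Hist ((f (n+1)).1) (f n).2 = Hist ((f n).1) (f n).2 :=
            Hist_congr (fun j hj => hlow j (by omega))
          rw [hend, hsame, hh, hnxt]
          by_cases hq1 : (f n).1 (f n).2 ∈ Q1
          · beta_reduce; rw [dif_pos hq1]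
            exact ⟨hσ _ _ hq1, fun _ => rfl⟩
          · beta_reduce; rw [dif_neg hq1]
            exact ⟨choose_spec (hE ((f n).1 (f n).2)), fun h => absurd h hq1⟩
  refine ⟨limSeq f, limit_outcome Q1 E hm hag σ q (hInv 0).1 (fun k => (hInv k).2), ?_⟩
  intro i hi
  exact limSeq_eq hm hag 0 i hi

/-- Pigeonhole: if infinitely many positions satisfy `P`, some state with `P`
occurs infinitely often. -/
lemma pigeon [Fintype Q] (ρ : ℕ → Q) (P : Q → Prop)
    (h : ∀ N, ∃ n, N ≤ n ∧ P (ρ n)) : ∃ s, P s ∧ InfOften ρ s := by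
  by_contra hc
  push_neg at hc
  have hc' : ∀ s, ∃ N, P s → ∀ n, N ≤ n → ρ n ≠ s := by
    intro s
    by_cases hPs : P s
    · have := hc s hPs
      unfold InfOften at this
      push_neg at this
      obtain ⟨N, hN⟩ := this
      exact ⟨N, fun _ n hn => hN n hn⟩
    · exact ⟨0, fun h' => absurd h' hPs⟩
  choose g hg using hc'
  obtain ⟨n, hn, hPn⟩ := h (Finset.univ.sup g)
  exact hg (ρ n) hPn n (le_trans (Finset.le_sup (Finset.mem_univ (ρ n))) hn) rfl

lemma no_inf_one [Fintype Q] (hp : ∀ x, p x = 1 ∨ p x = 2) (ρ : ℕ → Q)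
    (hpar : ParityCond p ρ) (hB : ∀ N, ∃ n, N ≤ n ∧ p (ρ n) = 1) : False := by
  obtain ⟨b, hb1, hbio⟩ := pigeon ρ (fun s => p s = 1) hB
  obtain ⟨q0, hq0, heven, hmin⟩ := hpar
  have hle := hmin b hbio
  rw [hb1] at hle
  rcases hp q0 with h1 | h1 <;> rw [h1] at heven hle
  · exact (Nat.not_even_iff.mpr rfl) heven
  · omega

/-- Key lemma: in a player-1 trap with no safe states, player 1 cannot win. -/
lemma trap_no_win [Fintype Q] (hE : ∀ x, ∃ t, E x t) (hp : ∀ x, p x = 1 ∨ p x = 2)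
    (C : Set Q)
    (t1 : ∀ s ∈ C, s ∈ Q1 → ∀ t, E s t → t ∈ C)
    (t3 : ∀ s c, ¬ WinsSafe Q1 E p w C s c)
    (q : Q) (hq : q ∈ C) : ¬ Player1Wins Q1 E p w q := by
  rintro ⟨σ, c₀, hσ, hwin⟩
  set Inv : (ℕ → Q) × ℕ → Prop := fun x => x.1 0 = q ∧ (∀ i ≤ x.2, x.1 i ∈ C) ∧
    (∀ i < x.2, E (x.1 i) (x.1 (i+1))) ∧
    (∀ i < x.2, x.1 i ∈ Q1 → x.1 (i+1) = σ (Hist x.1 i) (x.1 i)) with hInvDef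
  have step : ∀ x, Inv x → ∃ y, Inv y ∧ x.2 < y.2 ∧ (∀ i ≤ x.2, y.1 i = x.1 i) ∧
      p (y.1 y.2) = 1 := by
    rintro ⟨γ, m⟩ ⟨hq0, hCmem, hedge, hcons⟩
    simp only at hq0 hCmem hedge hcons
    set s' := γ m with hs'
    have hs'C : s' ∈ C := hCmem m le_rfl
    set c : ℕ := (c₀ + EL w γ m).toNat with hc
    set σres : List Q → Q → Q := fun h x => σ (Hist γ m ++ h) x with hσres
    have hval : ValidIn Q1 E C σres := by
      intro h x hx
      exact ⟨hσ _ _ hx, fun hxC => t1 x hxC hx _ (hσ _ _ hx)⟩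
    have hne : ¬ (∀ γ' m', FinPref Q1 E C σres s' γ' m' →
        (0 ≤ (c : ℤ) + EL w γ' m') ∧ ∀ i, 1 ≤ i → i ≤ m' → p (γ' i) ≠ 1) :=
      fun hall => t3 s' c ⟨hs'C, σres, hval, hall⟩
    push_neg at hne
    obtain ⟨γ', m', hpref, hbad⟩ := hne
    obtain ⟨hγ'0, hedge', hcons'⟩ := hpref
    set ζ : ℕ → Q := fun i => if i < m then γ i else γ' (i - m) with hζ
    have hζlow : ∀ i ≤ m, ζ i = γ i := by
      intro i hi
      rcases Nat.lt_or_ge i m with h1 | h1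
      · simp [hζ, h1]
      · have : i = m := by omega
        subst this
        simp [hζ, hγ'0, hs']
    have hζhigh : ∀ a, ζ (m + a) = γ' a := by
      intro a
      simp [hζ]
    have hζC : ∀ a ≤ m', γ' a ∈ C := by
      intro a ha
      match a with
      | 0 => rw [hγ'0]; exact hs'C
      | (b+1) => exact (hedge' b (by omega)).2
    have hζhist : ∀ a, Hist ζ (m + a) = Hist γ m ++ Hist γ' a := by
      intro a
      rw [Hist_add]
      congr 1
      · exact Hist_congr (fun j hj => hζlow j (by omega))
      · exact List.map_congr_left (fun b hb => hζhigh b)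
    have hCompInv : ∀ n ≤ m', Inv (ζ, m + n) := by
      intro n hn
      have c1 : ζ 0 = q := by rw [hζlow 0 (by omega)]; exact hq0
      have c2 : ∀ i ≤ m + n, ζ i ∈ C := by
        intro i hi
        rcases Nat.lt_or_ge i m with h1 | h1
        · rw [hζlow i (by omega)]; exact hCmem i (by omega)
        · obtain ⟨a, rfl⟩ := Nat.exists_eq_add_of_le h1
          rw [hζhigh a]
          exact hζC a (by omega)
      have c3 : ∀ i < m + n, E (ζ i) (ζ (i+1)) := by
        intro i hi
        rcases Nat.lt_or_ge i m with h1 | h1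
        · rw [hζlow i (by omega), hζlow (i+1) (by omega)]
          exact hedge i h1
        · obtain ⟨a, rfl⟩ := Nat.exists_eq_add_of_le h1
          rw [hζhigh a, show m + a + 1 = m + (a+1) by omega, hζhigh (a+1)]
          exact (hedge' a (by omega)).1
      have c4 : ∀ i < m + n, ζ i ∈ Q1 → ζ (i+1) = σ (Hist ζ i) (ζ i) := by
        intro i hi hQ1
        rcases Nat.lt_or_ge i m with h1 | h1
        · rw [hζlow i (by omega)] at hQ1 ⊢
          rw [hζlow (i+1) (by omega), Hist_congr (fun j hj => hζlow j (by omega))]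
          exact hcons i h1 hQ1
        · obtain ⟨a, rfl⟩ := Nat.exists_eq_add_of_le h1
          rw [hζhigh a] at hQ1 ⊢
          rw [show m + a + 1 = m + (a+1) by omega, hζhigh (a+1), hζhist a]
          exact hcons' a (by omega) hQ1
      exact ⟨c1, c2, c3, c4⟩
    have hEL : EL w ζ (m + m') = EL w γ m + EL w γ' m' := by
      rw [EL_add]
      congr 1
      · exact EL_congr w hζlow
      · refine Finset.sum_congr rfl (fun a ha => ?_)
        rw [hζhigh a, show m + a + 1 = m + (a+1) by omega, hζhigh (a+1)]
    by_cases hen : 0 ≤ (c : ℤ) + EL w γ' m'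
    · obtain ⟨i, hi1, him, hpi⟩ := hbad hen
      refine ⟨(ζ, m + i), hCompInv i him, by show m < m + i; omega,
        fun j hj => hζlow j hj, ?_⟩
      show p (ζ (m + i)) = 1
      rw [hζhigh i]
      exact hpi
    · exfalso
      obtain ⟨hz0, hzC, hzedge, hzcons⟩ := hCompInv m' le_rfl
      obtain ⟨ρ, hρout, hρeq⟩ :=
        extend_outcome Q1 E hE σ hσ q ζ (m + m') hz0 hzedge hzcons
      have hEn := (hwin ρ hρout).2 (m + m')
      have hELρ : EL w ρ (m + m') = EL w ζ (m + m') := EL_congr w hρeq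
      have hcge : (c : ℤ) ≥ c₀ + EL w γ m := Int.self_le_toNat _
      rw [hELρ, hEL] at hEn
      omega
  -- iterate the step to build a play visiting priority 1 infinitely often
  have inv0 : Inv (fun _ => q, 0) := by
    refine ⟨rfl, ?_, by omega, by omega⟩
    intro i hi
    exact hq
  set T : {x : (ℕ → Q) × ℕ // Inv x} → {x : (ℕ → Q) × ℕ // Inv x} :=
    fun a => ⟨choose (step a.1 a.2), (choose_spec (step a.1 a.2)).1⟩ with hTd
  set S : ℕ → {x : (ℕ → Q) × ℕ // Inv x} := fun k => T^[k] ⟨(fun _ => q, 0), inv0⟩ with hS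
  have hSs : ∀ k, S (k+1) = T (S k) := by
    intro k
    simp only [hS, Function.iterate_succ_apply']
  set f : ℕ → (ℕ → Q) × ℕ := fun k => (S k).1 with hfd
  have hspec : ∀ k, (f k).2 < (f (k+1)).2 ∧ (∀ i ≤ (f k).2, (f (k+1)).1 i = (f k).1 i) ∧
      p ((f (k+1)).1 (f (k+1)).2) = 1 := by
    intro k
    have := (choose_spec (step (S k).1 (S k).2)).2
    have he : f (k+1) = choose (step (S k).1 (S k).2) := by
      show (S (k+1)).1 = _
      rw [hSs k]
    rw [he]
    exact this
  have hm : ∀ k, (f k).2 < (f (k+1)).2 := fun k => (hspec k).1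
  have hag : ∀ k i, i ≤ (f k).2 → (f (k+1)).1 i = (f k).1 i := fun k => (hspec k).2.1
  have hout : IsOutcome Q1 E σ q (limSeq f) := by
    refine limit_outcome Q1 E hm hag σ q (S 0).2.1 (fun k i hi => ?_)
    exact ⟨(S k).2.2.2.1 i hi, (S k).2.2.2.2 i hi⟩
  refine no_inf_one p hp (limSeq f) (hwin _ hout).1 (fun N => ?_)
  refine ⟨(f (N+1)).2, ?_, ?_⟩
  · have h1 : N + 1 ≤ (f (N+1)).2 := seq_mge hm (N+1)
    omega
  · rw [limSeq_eq hm hag (N+1) (f (N+1)).2 le_rfl]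
    exact (hspec N).2.2
end AuxDev3

section AuxDev4
open Classical
variable {Q : Type*} (Q1 : Set Q) (E : Q → Q → Prop) (p : Q → ℕ) (w : Q → Q → ℤ)

def InL (s : Q) : Prop := ∃ j, s ∈ AA Q1 E p w (LL Q1 E p w j)ᶜ

noncomputable def jln (s : Q) : ℕ := if h : InL Q1 E p w s then Nat.find h else 0

/-- The subarena in which `s` lives. -/
noncomputable def Cj (s : Q) : Set Q := (LL Q1 E p w (jln Q1 E p w s))ᶜ

def InA (C : Set Q) (s : Q) : Prop := ∃ r, s ∈ attr Q1 E p w C r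

lemma mem_AA_iff {C : Set Q} {s : Q} : s ∈ AA Q1 E p w C ↔ InA Q1 E p w C s :=
  Set.mem_iUnion

noncomputable def rnk (s : Q) : ℕ :=
  if h : InA Q1 E p w (Cj Q1 E p w s) s then Nat.find h else 0

lemma jln_spec {s : Q} (h : InL Q1 E p w s) :
    s ∈ AA Q1 E p w (Cj Q1 E p w s) := by
  rw [Cj, jln, dif_pos h]
  exact Nat.find_spec h

lemma jln_min {s : Q} (h : InL Q1 E p w s) {j : ℕ}
    (hj : s ∈ AA Q1 E p w (LL Q1 E p w j)ᶜ) : jln Q1 E p w s ≤ j := by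
  rw [jln, dif_pos h]
  exact Nat.find_min' h hj

lemma rnk_spec {s : Q} (h : InL Q1 E p w s) :
    s ∈ attr Q1 E p w (Cj Q1 E p w s) (rnk Q1 E p w s) := by
  have h2 : InA Q1 E p w (Cj Q1 E p w s) s := mem_AA_iff Q1 E p w |>.mp (jln_spec Q1 E p w h)
  rw [rnk, dif_pos h2]
  exact Nat.find_spec h2

lemma rnk_min {s : Q} {r : ℕ} (hr : s ∈ attr Q1 E p w (Cj Q1 E p w s) r) :
    rnk Q1 E p w s ≤ r := by
  have h2 : InA Q1 E p w (Cj Q1 E p w s) s := ⟨r, hr⟩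
  rw [rnk, dif_pos h2]
  exact Nat.find_min' h2 hr

lemma rnk_zero_iff {s : Q} (h : InL Q1 E p w s) :
    rnk Q1 E p w s = 0 ↔ s ∈ SafeSet Q1 E p w (Cj Q1 E p w s) := by
  constructor
  · intro h0
    have := rnk_spec Q1 E p w h
    rw [h0] at this
    exact this
  · intro hs
    exact Nat.le_zero.mp (rnk_min Q1 E p w (r := 0) hs)

lemma InL_of_mem_LL {t : Q} {j : ℕ} (ht : t ∈ LL Q1 E p w j) :
    InL Q1 E p w t ∧ jln Q1 E p w t < j := by
  obtain ⟨j', hj', hmem⟩ := (mem_LL_iff Q1 E p w).mp ht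
  have hIn : InL Q1 E p w t := ⟨j', hmem⟩
  exact ⟨hIn, lt_of_le_of_lt (jln_min Q1 E p w hIn hmem) hj'⟩

lemma Cj_eq_of_jln_eq {s t : Q} (h : jln Q1 E p w t = jln Q1 E p w s) :
    Cj Q1 E p w t = Cj Q1 E p w s := by
  rw [Cj, Cj, h]

lemma attr_move {s : Q} (h : InL Q1 E p w s)
    (h0 : s ∉ SafeSet Q1 E p w (Cj Q1 E p w s)) :
    rnk Q1 E p w s ≠ 0 ∧
      ((s ∈ Q1 ∧ ∃ t, E s t ∧ (t ∈ attr Q1 E p w (Cj Q1 E p w s) (rnk Q1 E p w s - 1) ∨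
          t ∉ Cj Q1 E p w s)) ∨
       (s ∉ Q1 ∧ ∀ t, E s t → t ∈ Cj Q1 E p w s →
          t ∈ attr Q1 E p w (Cj Q1 E p w s) (rnk Q1 E p w s - 1))) := by
  have hne : rnk Q1 E p w s ≠ 0 := fun hr => h0 ((rnk_zero_iff Q1 E p w h).mp hr)
  refine ⟨hne, ?_⟩
  obtain ⟨r', hr'⟩ := Nat.exists_eq_succ_of_ne_zero hne
  have hspec := rnk_spec Q1 E p w h
  rw [hr'] at hspec
  have hnot : s ∉ attr Q1 E p w (Cj Q1 E p w s) r' := by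
    intro hmem
    have := rnk_min Q1 E p w hmem
    omega
  rcases hspec with hmem | hmem
  · exact absurd hmem hnot
  · have : rnk Q1 E p w s - 1 = r' := by omega
    rw [this]
    exact hmem.2

lemma attr_move1 {s : Q} (h : InL Q1 E p w s) (hQ1 : s ∈ Q1)
    (h0 : s ∉ SafeSet Q1 E p w (Cj Q1 E p w s)) :
    ∃ t, E s t ∧ (t ∈ attr Q1 E p w (Cj Q1 E p w s) (rnk Q1 E p w s - 1) ∨
      t ∉ Cj Q1 E p w s) := by
  rcases (attr_move Q1 E p w h h0).2 with h1 | h1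
  · exact h1.2
  · exact absurd hQ1 h1.1

/-- The memoryless strategy. -/
noncomputable def sigfin (hE : ∀ x, ∃ t, E x t) : Q → Q := fun s =>
  if h1 : s ∈ Q1 ∧ s ∈ SafeSet Q1 E p w (Cj Q1 E p w s) then
    choose (greedy1 Q1 E p w h1.2 h1.1)
  else if h2 : InL Q1 E p w s ∧ s ∈ Q1 ∧ s ∉ SafeSet Q1 E p w (Cj Q1 E p w s) then
    choose (attr_move1 Q1 E p w h2.1 h2.2.1 h2.2.2)
  else choose (hE s)

lemma sigfin_valid (hE : ∀ x, ∃ t, E x t) (s : Q) : E s (sigfin Q1 E p w hE s) := by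
  rw [sigfin]
  split_ifs with h1 h2
  · exact (choose_spec (greedy1 Q1 E p w h1.2 h1.1)).1
  · exact (choose_spec (attr_move1 Q1 E p w h2.1 h2.2.1 h2.2.2)).1
  · exact choose_spec (hE s)

lemma lt_of_attr {s t : Q} (hs : InL Q1 E p w s) {r' : ℕ}
    (ht : t ∈ attr Q1 E p w (Cj Q1 E p w s) r' ∨ t ∉ Cj Q1 E p w s)
    (hr : r' < rnk Q1 E p w s) :
    InL Q1 E p w t ∧
      toLex (jln Q1 E p w t, rnk Q1 E p w t) < toLex (jln Q1 E p w s, rnk Q1 E p w s) := by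
  rcases ht with ht | ht
  · have hInt : InL Q1 E p w t := ⟨jln Q1 E p w s, Set.mem_iUnion.mpr ⟨r', ht⟩⟩
    have hle : jln Q1 E p w t ≤ jln Q1 E p w s :=
      jln_min Q1 E p w hInt (Set.mem_iUnion.mpr ⟨r', ht⟩)
    refine ⟨hInt, ?_⟩
    rcases Nat.lt_or_ge (jln Q1 E p w t) (jln Q1 E p w s) with h1 | h1
    · exact Prod.Lex.lt_iff.mpr (Or.inl h1)
    · have heq : jln Q1 E p w t = jln Q1 E p w s := by omega
      have hCeq := Cj_eq_of_jln_eq Q1 E p w heq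
      have : rnk Q1 E p w t ≤ r' := by
        apply rnk_min Q1 E p w
        rw [hCeq]
        exact ht
      exact Prod.Lex.lt_iff.mpr (Or.inr ⟨heq, show rnk Q1 E p w t < rnk Q1 E p w s by omega⟩)
  · have htL : t ∈ LL Q1 E p w (jln Q1 E p w s) := not_not.mp ht
    obtain ⟨hInt, hlt⟩ := InL_of_mem_LL Q1 E p w htL
    exact ⟨hInt, Prod.Lex.lt_iff.mpr (Or.inl hlt)⟩

lemma safe_case {s t : Q} (hs : InL Q1 E p w s)
    (hr0 : rnk Q1 E p w s = 0)
    (hsafe : s ∈ SafeSet Q1 E p w (Cj Q1 E p w s))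
    (ht : t ∈ SafeSet Q1 E p w (Cj Q1 E p w s)) (hpt : p t ≠ 1)
    (hvv : (vv Q1 E p w (Cj Q1 E p w s) t : ℤ) ≤ vv Q1 E p w (Cj Q1 E p w s) s + w s t) :
    InL Q1 E p w t ∧
      (toLex (jln Q1 E p w t, rnk Q1 E p w t) < toLex (jln Q1 E p w s, rnk Q1 E p w s) ∨
        (jln Q1 E p w t = jln Q1 E p w s ∧ rnk Q1 E p w t = 0 ∧ rnk Q1 E p w s = 0 ∧
         s ∈ SafeSet Q1 E p w (Cj Q1 E p w s) ∧ t ∈ SafeSet Q1 E p w (Cj Q1 E p w s) ∧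
         p t ≠ 1 ∧
         (vv Q1 E p w (Cj Q1 E p w s) t : ℤ) ≤ vv Q1 E p w (Cj Q1 E p w s) s + w s t)) := by
  have htA : t ∈ AA Q1 E p w (Cj Q1 E p w s) := Set.mem_iUnion.mpr ⟨0, ht⟩
  have hInt : InL Q1 E p w t := ⟨jln Q1 E p w s, htA⟩
  have hle : jln Q1 E p w t ≤ jln Q1 E p w s := jln_min Q1 E p w hInt htA
  refine ⟨hInt, ?_⟩
  rcases Nat.lt_or_ge (jln Q1 E p w t) (jln Q1 E p w s) with h1 | h1
  · exact Or.inl (Prod.Lex.lt_iff.mpr (Or.inl h1))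
  · have heq : jln Q1 E p w t = jln Q1 E p w s := by omega
    have hCeq := Cj_eq_of_jln_eq Q1 E p w heq
    have hrt : rnk Q1 E p w t = 0 := by
      apply (rnk_zero_iff Q1 E p w hInt).mpr
      rw [hCeq]
      exact ht
    exact Or.inr ⟨heq, hrt, hr0, hsafe, ht, hpt, hvv⟩

/-- The main step lemma: along any edge consistent with `sigfin`, the lexicographic
measure decreases, or we stay inside the same safe region with good properties. -/
lemma step_main (hE : ∀ x, ∃ t, E x t) {s t : Q} (hs : InL Q1 E p w s)
    (hmv : s ∈ Q1 → t = sigfin Q1 E p w hE s) (hEt : E s t) :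
    InL Q1 E p w t ∧
      (toLex (jln Q1 E p w t, rnk Q1 E p w t) < toLex (jln Q1 E p w s, rnk Q1 E p w s) ∨
        (jln Q1 E p w t = jln Q1 E p w s ∧ rnk Q1 E p w t = 0 ∧ rnk Q1 E p w s = 0 ∧
         s ∈ SafeSet Q1 E p w (Cj Q1 E p w s) ∧ t ∈ SafeSet Q1 E p w (Cj Q1 E p w s) ∧
         p t ≠ 1 ∧
         (vv Q1 E p w (Cj Q1 E p w s) t : ℤ) ≤ vv Q1 E p w (Cj Q1 E p w s) s + w s t)) := by
  by_cases hsafe : s ∈ SafeSet Q1 E p w (Cj Q1 E p w s)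
  · have hr0 : rnk Q1 E p w s = 0 := (rnk_zero_iff Q1 E p w hs).mpr hsafe
    by_cases hQ1 : s ∈ Q1
    · have hteq : t = choose (greedy1 Q1 E p w hsafe hQ1) := by
        rw [hmv hQ1, sigfin, dif_pos ⟨hQ1, hsafe⟩]
      obtain ⟨hE', hpt, htS, hvv⟩ := choose_spec (greedy1 Q1 E p w hsafe hQ1)
      rw [hteq]
      exact safe_case Q1 E p w hs hr0 hsafe htS hpt hvv
    · by_cases htC : t ∈ Cj Q1 E p w s
      · obtain ⟨hpt, htS, hvv⟩ := greedy2 Q1 E p w hsafe hQ1 hEt htC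
        exact safe_case Q1 E p w hs hr0 hsafe htS hpt hvv
      · have htL : t ∈ LL Q1 E p w (jln Q1 E p w s) := not_not.mp htC
        obtain ⟨hInt, hlt⟩ := InL_of_mem_LL Q1 E p w htL
        exact ⟨hInt, Or.inl (Prod.Lex.lt_iff.mpr (Or.inl hlt))⟩
  · obtain ⟨hne, hrule⟩ := attr_move Q1 E p w hs hsafe
    by_cases hQ1 : s ∈ Q1
    · have hteq : t = choose (attr_move1 Q1 E p w hs hQ1 hsafe) := by
        rw [hmv hQ1, sigfin]
        rw [dif_neg (by tauto), dif_pos ⟨hs, hQ1, hsafe⟩]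
      obtain ⟨hE', hd⟩ := choose_spec (attr_move1 Q1 E p w hs hQ1 hsafe)
      rw [hteq]
      obtain ⟨hInt, hlt⟩ := lt_of_attr Q1 E p w (r' := rnk Q1 E p w s - 1) hs hd (by omega)
      exact ⟨hInt, Or.inl hlt⟩
    · rcases hrule with h1 | h1
      · exact absurd h1.1 hQ1
      · by_cases htC : t ∈ Cj Q1 E p w s
        · have := h1.2 t hEt htC
          obtain ⟨hInt, hlt⟩ := lt_of_attr Q1 E p w (r' := rnk Q1 E p w s - 1) hs (Or.inl this) (by omega)
          exact ⟨hInt, Or.inl hlt⟩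
        · obtain ⟨hInt, hlt⟩ := lt_of_attr Q1 E p w (r' := rnk Q1 E p w s - 1) hs (Or.inr htC) (by omega)
          exact ⟨hInt, Or.inl hlt⟩
end AuxDev4

section AuxDev5
open Classical
variable {Q : Type*} (Q1 : Set Q) (E : Q → Q → Prop) (p : Q → ℕ) (w : Q → Q → ℤ)

/-- Every cycle of an outcome of `sigfin` has nonnegative energy and avoids priority 1. -/
lemma cycle_good (hE : ∀ x, ∃ t, E x t) {q : Q} (hq : InL Q1 E p w q)
    {ρ : ℕ → Q} (hρ : MemlessOutcome Q1 E (sigfin Q1 E p w hE) q ρ)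
    {i k : ℕ} (hk : 0 < k) (hik : ρ i = ρ (i + k)) :
    (0 ≤ ∑ a ∈ Finset.range k, w (ρ (i+a)) (ρ (i+a+1))) ∧ ∀ a < k, p (ρ (i+a)) ≠ 1 := by
  obtain ⟨h0, hplay, hcons⟩ := hρ
  have hInL : ∀ n, InL Q1 E p w (ρ n) := by
    intro n
    induction n with
    | zero => rw [h0]; exact hq
    | succ n ih =>
      exact (step_main Q1 E p w hE ih (hcons n) (hplay n)).1
  set ν' : ℕ → ℕ × ℕ := fun n => (jln Q1 E p w (ρ n), rnk Q1 E p w (ρ n)) with hν'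
  have hdich := fun n => (step_main Q1 E p w hE (hInL n) (hcons n) (hplay n)).2
  have hanti : ∀ n, toLex (ν' (n+1)) ≤ toLex (ν' n) := by
    intro n
    rcases hdich n with h | h
    · exact le_of_lt h
    · apply le_of_eq
      rw [hν']
      simp only
      rw [h.1, h.2.1, h.2.2.1]
  have hmono' : ∀ a d, toLex (ν' (a + d)) ≤ toLex (ν' a) := by
    intro a d
    induction d with
    | zero => exact le_rfl
    | succ c ihc =>
      refine le_trans ?_ ihc
      rw [show a + (c+1) = (a+c)+1 by omega]
      exact hanti (a+c)
  have hmono : ∀ a b, a ≤ b → toLex (ν' b) ≤ toLex (ν' a) := by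
    intro a b hab
    obtain ⟨d, rfl⟩ := Nat.exists_eq_add_of_le hab
    exact hmono' a d
  have hνik : ν' (i + k) = ν' i := by rw [hν']; simp only; rw [hik]
  have hconst : ∀ a ≤ k, ν' (i + a) = ν' i := by
    intro a ha
    have h1 : toLex (ν' (i+a)) ≤ toLex (ν' i) := hmono i (i+a) (by omega)
    have h2 : toLex (ν' (i+k)) ≤ toLex (ν' (i+a)) := hmono (i+a) (i+k) (by omega)
    rw [hνik] at h2
    exact toLex.injective (le_antisymm h1 h2)
  have hsteps : ∀ a < k,
      jln Q1 E p w (ρ (i+a+1)) = jln Q1 E p w (ρ (i+a)) ∧ rnk Q1 E p w (ρ (i+a+1)) = 0 ∧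
      rnk Q1 E p w (ρ (i+a)) = 0 ∧
      ρ (i+a) ∈ SafeSet Q1 E p w (Cj Q1 E p w (ρ (i+a))) ∧
      ρ (i+a+1) ∈ SafeSet Q1 E p w (Cj Q1 E p w (ρ (i+a))) ∧
      p (ρ (i+a+1)) ≠ 1 ∧
      (vv Q1 E p w (Cj Q1 E p w (ρ (i+a))) (ρ (i+a+1)) : ℤ) ≤
        vv Q1 E p w (Cj Q1 E p w (ρ (i+a))) (ρ (i+a)) + w (ρ (i+a)) (ρ (i+a+1)) := by
    intro a ha
    rcases hdich (i+a) with h | h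
    · exfalso
      have e1 : ν' (i+a) = ν' i := hconst a (by omega)
      have e2 : ν' (i+a+1) = ν' i := by
        rw [show i+a+1 = i+(a+1) by omega]
        exact hconst (a+1) (by omega)
      rw [show (jln Q1 E p w (ρ (i+a+1)), rnk Q1 E p w (ρ (i+a+1))) = ν' (i+a+1) from rfl,
        show (jln Q1 E p w (ρ (i+a)), rnk Q1 E p w (ρ (i+a))) = ν' (i+a) from rfl,
        e1, e2] at h
      exact lt_irrefl _ h
    · exact h
  have hjconst : ∀ a ≤ k, jln Q1 E p w (ρ (i+a)) = jln Q1 E p w (ρ i) := by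
    intro a ha
    have := hconst a ha
    rw [hν'] at this
    simp only at this
    exact (Prod.mk.injEq _ _ _ _ ▸ this).1
  set C := Cj Q1 E p w (ρ i) with hC
  have hCeq : ∀ a ≤ k, Cj Q1 E p w (ρ (i+a)) = C := by
    intro a ha
    rw [hC]
    exact Cj_eq_of_jln_eq Q1 E p w (hjconst a ha)
  constructor
  · -- telescoping the value function
    have htel : ∀ a ≤ k, (vv Q1 E p w C (ρ (i+a)) : ℤ) ≤
        vv Q1 E p w C (ρ i) + ∑ b ∈ Finset.range a, w (ρ (i+b)) (ρ (i+b+1)) := by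
      intro a ha
      induction a with
      | zero => simp
      | succ b ihb =>
        have hb : b < k := by omega
        have hstep := (hsteps b hb).2.2.2.2.2.2
        rw [hCeq b (by omega)] at hstep
        have := ihb (by omega)
        rw [Finset.sum_range_succ, show i + (b+1) = i + b + 1 by omega]
        linarith
    have := htel k le_rfl
    rw [hik] at this
    linarith
  · intro a ha
    rcases Nat.eq_zero_or_pos a with rfl | hpos
    · have := (hsteps (k-1) (by omega)).2.2.2.2.2.1
      rw [show i+(k-1)+1 = i + k by omega] at this
      rw [show i + 0 = i by omega, hik]
      exact this
    · have := (hsteps (a-1) (by omega)).2.2.2.2.2.1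
      rwa [show i+(a-1)+1 = i + a by omega] at this
end AuxDev5

/-- memoryless strategies suffice for player 1 in energy coBüchi games
(priorities in `{1,2}`): if player 1 wins from `q` with some finite initial credit,
then player 1 has a memoryless strategy winning from `q` with initial credit
`(n−1)·W`. -/
theorem stmt7 {Q : Type*} [Fintype Q] (Q1 : Set Q) (E : Q → Q → Prop)
    (hE : ∀ q, ∃ q', E q q') (p : Q → ℕ) (w : Q → Q → ℤ)
    (hp : ∀ q, p q = 1 ∨ p q = 2)
    (n W : ℕ) (hn : Fintype.card Q = n) (hW : 1 ≤ W)
    (hWmax : ∀ q q', E q q' → |w q q'| ≤ (W : ℤ))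
    (q : Q) (hwin : Player1Wins Q1 E p w q) :
    ∃ σ : Q → Q, (∀ s ∈ Q1, E s (σ s)) ∧
      ∀ ρ, MemlessOutcome Q1 E σ q ρ →
        ParityCond p ρ ∧ EnergyCond w ((n - 1) * W) ρ := by
  classical
  obtain ⟨K, hK⟩ := exists_stab (LL Q1 E p w) (LL_mono_succ Q1 E p w)
  have hAA : AA Q1 E p w (LL Q1 E p w K)ᶜ ⊆ LL Q1 E p w K := by
    intro s hs
    have h2 : s ∈ LL Q1 E p w (K+1) := Or.inr hs
    rwa [hK] at h2
  have t1 : ∀ s ∈ (LL Q1 E p w K)ᶜ, s ∈ Q1 → ∀ t, E s t → t ∈ (LL Q1 E p w K)ᶜ := by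
    intro s hs hQ1 t hEt
    by_contra htc
    apply hs
    apply hAA
    refine Set.mem_iUnion.mpr ⟨1, ?_⟩
    show s ∈ attrStep Q1 E (LL Q1 E p w K)ᶜ (attr Q1 E p w (LL Q1 E p w K)ᶜ 0)
    exact Or.inr ⟨hs, Or.inl ⟨hQ1, t, hEt, Or.inr htc⟩⟩
  have t3 : ∀ s c, ¬ WinsSafe Q1 E p w (LL Q1 E p w K)ᶜ s c := by
    intro s c hw
    have h1 : s ∈ AA Q1 E p w (LL Q1 E p w K)ᶜ := Set.mem_iUnion.mpr ⟨0, ⟨c, hw⟩⟩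
    exact hw.1 (hAA h1)
  have hqL : q ∈ LL Q1 E p w K := by
    by_contra hqc
    exact trap_no_win Q1 E p w hE hp _ t1 t3 q hqc hwin
  have hqIn : InL Q1 E p w q := (InL_of_mem_LL Q1 E p w hqL).1
  refine ⟨sigfin Q1 E p w hE, fun s _ => sigfin_valid Q1 E p w hE s, fun ρ hρ => ?_⟩
  have hnotone : ∀ s, InfOften ρ s → p s ≠ 1 := by
    intro s hinf
    obtain ⟨n1, _, hn1⟩ := hinf 0
    obtain ⟨n2, hn2ge, hn2⟩ := hinf (n1+1)
    have hik : ρ n1 = ρ (n1 + (n2 - n1)) := by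
      rw [show n1 + (n2 - n1) = n2 by omega, hn1, hn2]
    have h3 := (cycle_good Q1 E p w hE hqIn hρ (by omega) hik).2 0 (by omega)
    rwa [show n1 + 0 = n1 by omega, hn1] at h3
  constructor
  · obtain ⟨s0, -, hs0⟩ := pigeon ρ (fun _ => True) (fun N => ⟨N, le_rfl, trivial⟩)
    have hp0 : p s0 = 2 := by
      rcases hp s0 with h | h
      · exact absurd h (hnotone s0 hs0)
      · exact h
    refine ⟨s0, hs0, by rw [hp0]; exact even_two, ?_⟩
    intro q' hq'
    have hq2 : p q' = 2 := by
      rcases hp q' with h | h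
      · exact absurd h (hnotone q' hq')
      · exact h
    rw [hp0, hq2]
  · have hn1 : 1 ≤ n := by
      have := Fintype.card_pos_iff.mpr ⟨q⟩
      omega
    have key : ∀ m (ρ' : ℕ → Q), MemlessOutcome Q1 E (sigfin Q1 E p w hE) q ρ' →
        0 ≤ (((n-1)*W : ℕ) : ℤ) + EL w ρ' m := by
      intro m
      induction m using Nat.strong_induction_on with
      | _ m IH =>
        intro ρ' hρ'
        rcases Nat.lt_or_ge m n with hmn | hmn
        · -- short prefix: no repetition needed
          have hterm : ∀ j ∈ Finset.range m, -(W:ℤ) ≤ w (ρ' j) (ρ' (j+1)) :=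
            fun j _ => (abs_le.mp (hWmax _ _ (hρ'.2.1 j))).1
          have h1 := Finset.sum_le_sum hterm
          rw [Finset.sum_const, Finset.card_range, nsmul_eq_mul] at h1
          have hsum : (m : ℤ) * (-(W:ℤ)) ≤ EL w ρ' m := h1
          have hcast : (((n-1)*W : ℕ) : ℤ) = ((n:ℤ)-1)*(W:ℤ) := by
            rw [Nat.cast_mul, Nat.cast_sub hn1]
            norm_num
          have hW0 : (0:ℤ) ≤ (W:ℤ) := by positivity
          have hmle : (m:ℤ) ≤ (n:ℤ)-1 := by
            have : m ≤ n - 1 := by omega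
            omega
          nlinarith [hsum, hcast]
        · -- long prefix: cut out a cycle
          obtain ⟨a, ha, b, hb, hne, heq⟩ :=
            Finset.exists_ne_map_eq_of_card_lt_of_maps_to
              (s := Finset.range (n+1)) (t := (Finset.univ : Finset Q))
              (by rw [Finset.card_range, Finset.card_univ, hn]; omega)
              (f := ρ') (fun a _ => Finset.mem_univ _)
          obtain ⟨i, i', hii, hlt, heq'⟩ : ∃ i i', i' ≤ n ∧ i < i' ∧ ρ' i = ρ' i' := by
            have ha' : a ≤ n := by have := Finset.mem_range.mp ha; omega
            have hb' : b ≤ n := by have := Finset.mem_range.mp hb; omega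
            rcases (Ne.lt_or_gt hne) with h | h
            · exact ⟨a, b, hb', h, heq⟩
            · exact ⟨b, a, ha', h, heq.symm⟩
          set k := i' - i with hkd
          have hkpos : 0 < k := by omega
          have hik : ρ' i = ρ' (i + k) := by
            rw [show i + k = i' by omega]
            exact heq'
          have hcyc := (cycle_good Q1 E p w hE hqIn hρ' hkpos hik).1
          obtain ⟨g0, gplay, gcons⟩ := hρ'
          set ρ'' : ℕ → Q := fun j => if j < i then ρ' j else ρ' (j + k) with hρ''d
          have hlow : ∀ j, j < i → ρ'' j = ρ' j := fun j hj => if_pos hj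
          have hhigh : ∀ j, i ≤ j → ρ'' j = ρ' (j + k) := fun j hj => if_neg (by omega)
          have heqlow : ∀ j ≤ i, ρ'' j = ρ' j := by
            intro j hj
            rcases Nat.lt_or_ge j i with h1 | h1
            · exact hlow j h1
            · have hji : j = i := by omega
              subst hji
              rw [hhigh j le_rfl, ← hik]
          have hout'' : MemlessOutcome Q1 E (sigfin Q1 E p w hE) q ρ'' := by
            refine ⟨by rw [heqlow 0 (by omega), g0], ?_, ?_⟩
            · intro j
              rcases Nat.lt_or_ge (j+1) i with h1 | h1
              · rw [hlow j (by omega), hlow (j+1) h1]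
                exact gplay j
              · rcases Nat.lt_or_ge j i with h2 | h2
                · have hji : j + 1 = i := by omega
                  rw [hlow j h2, hhigh (j+1) (by omega), show j+1+k = i + k by omega,
                    ← hik]
                  have := gplay j
                  rwa [hji] at this
                · rw [hhigh j h2, hhigh (j+1) (by omega), show j+1+k = (j+k)+1 by omega]
                  exact gplay (j+k)
            · intro j hQ1
              rcases Nat.lt_or_ge (j+1) i with h1 | h1
              · rw [hlow j (by omega)] at hQ1 ⊢
                rw [hlow (j+1) h1]
                exact gcons j hQ1
              · rcases Nat.lt_or_ge j i with h2 | h2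
                · have hji : j + 1 = i := by omega
                  rw [hlow j h2] at hQ1 ⊢
                  rw [hhigh (j+1) (by omega), show j+1+k = i + k by omega, ← hik]
                  have := gcons j hQ1
                  rwa [hji] at this
                · rw [hhigh j h2] at hQ1 ⊢
                  rw [hhigh (j+1) (by omega), show j+1+k = (j+k)+1 by omega]
                  exact gcons (j+k) hQ1
          have hELeq : EL w ρ' m = EL w ρ'' (m - k) +
              ∑ c ∈ Finset.range k, w (ρ' (i+c)) (ρ' (i+c+1)) := by
            have hkn : i + k ≤ m := by omega
            set d := m - (i+k) with hdd
            have hA : EL w ρ'' i = EL w ρ' i := EL_congr w heqlow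
            have hB : ∑ c ∈ Finset.range d, w (ρ'' (i+c)) (ρ'' (i+c+1)) =
                ∑ c ∈ Finset.range d, w (ρ' (i+k+c)) (ρ' (i+k+c+1)) := by
              refine Finset.sum_congr rfl (fun c _ => ?_)
              rw [hhigh (i+c) (by omega), hhigh (i+c+1) (by omega),
                show i+c+k = i+k+c by omega, show i+c+1+k = i+k+c+1 by omega]
            have e1 : EL w ρ' m = EL w ρ' i +
                (∑ c ∈ Finset.range k, w (ρ' (i+c)) (ρ' (i+c+1))) +
                ∑ c ∈ Finset.range d, w (ρ' (i+k+c)) (ρ' (i+k+c+1)) := by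
              have h2 := EL_add w ρ' (i+k) d
              have h3 := EL_add w ρ' i k
              rw [show (i+k)+d = m by omega] at h2
              rw [h2, h3]
            have e2 : EL w ρ'' (m-k) = EL w ρ' i +
                ∑ c ∈ Finset.range d, w (ρ' (i+k+c)) (ρ' (i+k+c+1)) := by
              have h4 := EL_add w ρ'' i d
              rw [show i+d = m - k by omega] at h4
              rw [h4, hA, hB]
            rw [e1, e2]
            ring
          have hkm : m - k < m := by omega
          have hIH := IH (m-k) hkm ρ'' hout''
          rw [hELeq]
          linarith
    intro nn
    exact key nn ρ hρ
end

section
/- A memoryless player-1 strategy σ is good-for-energy in a state q₀ of an energy parity game ⟨G,p,w⟩ if and only if, in the restriction of the graph G_σ to the states reachable from q₀, every cycle (not necessarily simple) has nonnegative sum of weights, and every cycle with sum of weights equal to 0 has even minimal priority. -/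
variable {Q : Type*}

/-- The graph `G_σ` obtained by fixing the memoryless player-1 strategy `σ`: at
player-1 states only the `σ`-edge remains; at player-2 states all edges remain. -/
def GSigma (Q1 : Set Q) (E : Q → Q → Prop) (σ : Q → Q) (q q' : Q) : Prop :=
  (q ∈ Q1 ∧ q' = σ q) ∨ (q ∉ Q1 ∧ E q q')

private lemma reach_fun {Q : Type*} {r : Q → Q → Prop} {a b : Q}
    (h : Relation.ReflTransGen r a b) :
    ∃ (m : ℕ) (f : ℕ → Q), f 0 = a ∧ f m = b ∧ ∀ j < m, r (f j) (f (j + 1)) := by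
  induction h with
  | refl => exact ⟨0, fun _ => a, rfl, rfl, by omega⟩
  | @tail b' c' _ hbc ih =>
    obtain ⟨m, f, h0, hm, hstep⟩ := ih
    refine ⟨m + 1, fun n => if n ≤ m then f n else c', by simp [h0], by simp, ?_⟩
    intro j hj
    rcases Nat.lt_or_ge j m with h1 | h1
    · have e1 : j ≤ m := h1.le
      have e2 : j + 1 ≤ m := h1
      simpa [e1, e2] using hstep j h1
    · have : j = m := by omega
      subst this
      simpa [hm] using hbc

/-- a memoryless player-1 strategy `σ` is good-for-energy in `q₀` iff in
the restriction of `G_σ` to the states reachable from `q₀` every cycle has nonnegative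
sum of weights, and every cycle of weight `0` has even minimal priority. -/
theorem stmt8 {Q : Type*} [Fintype Q] (Q1 : Set Q) (E : Q → Q → Prop)
    (hE : ∀ q, ∃ q', E q q') (p : Q → ℕ) (w : Q → Q → ℤ)
    (σ : Q → Q) (hσ : ∀ s ∈ Q1, E s (σ s)) (q₀ : Q) :
    GoodForEnergy Q1 E p w σ q₀ ↔
      ∀ (k : ℕ) (c : ℕ → Q), 0 < k → c 0 = c k →
        (∀ j < k, GSigma Q1 E σ (c j) (c (j + 1))) →
        (∀ j ≤ k, Relation.ReflTransGen (GSigma Q1 E σ) q₀ (c j)) →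
        0 ≤ ∑ j ∈ Finset.range k, w (c j) (c (j + 1)) ∧
          (∑ j ∈ Finset.range k, w (c j) (c (j + 1)) = 0 →
            ∃ j ∈ Finset.range (k + 1), Even (p (c j)) ∧
              ∀ l ∈ Finset.range (k + 1), p (c j) ≤ p (c l)) := by
  constructor
  · -- forward
    intro hGFE k c hk hck hedge hreach
    obtain ⟨m, f, hf0, hfm, hfstep⟩ := reach_fun (hreach 0 (Nat.zero_le _))
    set ρ : ℕ → Q := fun n => if n < m then f n else c ((n - m) % k) with hρdef
    have hρm : ∀ r, ρ (m + r) = c (r % k) := by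
      intro r
      have : ¬ (m + r < m) := by omega
      simp [hρdef, this]
    have hck' : ∀ r ≤ k, c (r % k) = c r := by
      intro r hr
      rcases Nat.lt_or_ge r k with h | h
      · rw [Nat.mod_eq_of_lt h]
      · have : r = k := le_antisymm hr h
        subst this
        simp [Nat.mod_self, hck]
    have hρle : ∀ r ≤ k, ρ (m + r) = c r := fun r hr => (hρm r).trans (hck' r hr)
    have hGS : ∀ n, GSigma Q1 E σ (ρ n) (ρ (n + 1)) := by
      intro n
      rcases Nat.lt_or_ge n m with h | h
      · have h1 : ρ n = f n := if_pos h
        have h2 : ρ (n + 1) = f (n + 1) := by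
          rcases Nat.lt_or_ge (n + 1) m with h' | h'
          · exact if_pos h'
          · have hnm : n + 1 = m := by omega
            have h3 : ρ (n + 1) = c ((n + 1 - m) % k) := if_neg (by omega)
            rw [h3, hnm]
            simp [hfm]
        rw [h1, h2]; exact hfstep n h
      · obtain ⟨r, rfl⟩ := Nat.exists_eq_add_of_le h
        have hs : r % k < k := Nat.mod_lt _ hk
        have e1 : ρ (m + r) = c (r % k) := hρm r
        have e2 : ρ (m + r + 1) = c ((r + 1) % k) := hρm (r + 1)
        have e3 : (r % k + 1) % k = (r + 1) % k := Nat.mod_add_mod r k 1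
        have e4 : c ((r + 1) % k) = c (r % k + 1) := by
          rw [← e3]; exact hck' (r % k + 1) (by omega)
        rw [e1, e2, e4]
        exact hedge (r % k) hs
    have hplay : IsPlay E ρ := by
      intro n
      rcases hGS n with ⟨h1, h2⟩ | ⟨h1, h2⟩
      · rw [h2]; exact hσ _ h1
      · exact h2
    have hσc : ∀ i, ρ i ∈ Q1 → ρ (i + 1) = σ (ρ i) := by
      intro i hi
      rcases hGS i with ⟨_, h2⟩ | ⟨h1, _⟩
      · exact h2
      · exact absurd hi h1
    have h0 : ρ 0 = q₀ := by
      rcases Nat.eq_zero_or_pos m with hm0 | hm0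
      · have : ρ 0 = c (0 % k) := by
          subst hm0; simpa using hρm 0
        rw [this, Nat.zero_mod, ← hfm]
        · rw [hm0] at hfm ⊢; rw [← hfm] at *; exact hf0
      · have : ρ 0 = f 0 := if_pos hm0
        rw [this, hf0]
    have hρm0 : ρ m = c 0 := by simpa using hρle 0 (Nat.zero_le _)
    have hρmk : ρ (m + k) = c 0 := by rw [hρle k le_rfl, ← hck]
    have hsum : ∑ j ∈ Finset.Ico m (m + k), w (ρ j) (ρ (j + 1)) =
        ∑ r ∈ Finset.range k, w (c r) (c (r + 1)) := by
      rw [Finset.sum_Ico_eq_sum_range]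
      simp only [Nat.add_sub_cancel_left]
      refine Finset.sum_congr rfl fun r hr => ?_
      rw [Finset.mem_range] at hr
      have : m + r + 1 = m + (r + 1) := by omega
      rw [this, hρle r hr.le, hρle (r + 1) hr]
    have := hGFE ρ ⟨h0, hplay, hσc⟩ m k hk (hρm0.trans hρmk.symm)
    rcases this with hpos | ⟨hz, hmin⟩
    · rw [hsum] at hpos
      exact ⟨hpos.le, fun h => absurd h (by omega)⟩
    · rw [hsum] at hz
      refine ⟨hz.ge, fun _ => ?_⟩
      obtain ⟨j, hj, hev, hminall⟩ := hmin
      rw [Finset.mem_Icc] at hj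
      have hρj : ρ j = c (j - m) := by
        have := hρle (j - m) (by omega)
        rwa [show m + (j - m) = j from by omega] at this
      refine ⟨j - m, Finset.mem_range.mpr (by omega), by rwa [← hρj], ?_⟩
      intro l hl
      rw [Finset.mem_range] at hl
      have hρl : ρ (m + l) = c l := hρle l (by omega)
      have := hminall (m + l) (Finset.mem_Icc.mpr ⟨by omega, by omega⟩)
      rwa [hρj, hρl] at this
  · -- backward
    intro hcyc ρ hout i k hk hik
    obtain ⟨h0, hplay, hσc⟩ := hout
    have hGS : ∀ n, GSigma Q1 E σ (ρ n) (ρ (n + 1)) := by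
      intro n
      by_cases hn : ρ n ∈ Q1
      · exact Or.inl ⟨hn, hσc n hn⟩
      · exact Or.inr ⟨hn, hplay n⟩
    have hreachn : ∀ n, Relation.ReflTransGen (GSigma Q1 E σ) q₀ (ρ n) := by
      intro n
      induction n with
      | zero => rw [h0]
      | succ n ih => exact ih.tail (hGS n)
    set c : ℕ → Q := fun n => ρ (i + n) with hcdef
    have hc0k : c 0 = c k := hik
    have hedges : ∀ j < k, GSigma Q1 E σ (c j) (c (j + 1)) := fun j _ => hGS (i + j)
    have hreach : ∀ j ≤ k, Relation.ReflTransGen (GSigma Q1 E σ) q₀ (c j) :=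
      fun j _ => hreachn (i + j)
    obtain ⟨hle, hmin⟩ := hcyc k c hk hc0k hedges hreach
    have hsum : ∑ j ∈ Finset.Ico i (i + k), w (ρ j) (ρ (j + 1)) =
        ∑ j ∈ Finset.range k, w (c j) (c (j + 1)) := by
      rw [Finset.sum_Ico_eq_sum_range]
      simp only [Nat.add_sub_cancel_left]
      rfl
    rw [hsum]
    rcases lt_or_eq_of_le hle with hpos | hzero
    · exact Or.inl hpos
    · refine Or.inr ⟨hzero.symm, ?_⟩
      obtain ⟨j, hj, hev, hminall⟩ := hmin hzero.symm
      rw [Finset.mem_range] at hj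
      refine ⟨i + j, Finset.mem_Icc.mpr ⟨by omega, by omega⟩, hev, ?_⟩
      intro l hl
      rw [Finset.mem_Icc] at hl
      have hcl : c (l - i) = ρ l := by
        show ρ (i + (l - i)) = ρ l
        congr 1
        omega
      have := hminall (l - i) (Finset.mem_range.mpr (show l - i < k + 1 by omega))
      rwa [hcl] at this
end

section
/- Let σ be a memoryless player-1 strategy in an energy parity game with n states and largest absolute weight W that is good-for-energy in a state q. Then every finite prefix γ of every outcome of σ from q satisfies EL(w,γ) ≥ −(n−1)·W; in particular σ satisfies the energy condition from q with initial credit (n−1)·W. -/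
variable {Q : Type*}

private lemma stmt9_key {Q : Type*} [Fintype Q] (Q1 : Set Q) (E : Q → Q → Prop)
    (p : Q → ℕ) (w : Q → Q → ℤ) (n W : ℕ) (hn : Fintype.card Q = n)
    (hWmax : ∀ q q', E q q' → |w q q'| ≤ (W : ℤ))
    (σ : Q → Q) (q : Q)
    (hgfe : GoodForEnergy Q1 E p w σ q) :
    ∀ m ρ, MemlessOutcome Q1 E σ q ρ → -((((n - 1) * W : ℕ)) : ℤ) ≤ EL w ρ m := by
  have hn1 : 1 ≤ n := by
    rw [← hn]; exact Fintype.card_pos_iff.mpr ⟨q⟩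
  intro m
  induction m using Nat.strong_induction_on with
  | _ m ih =>
  intro ρ hρ
  by_cases hm : m < n
  · -- short prefix: each edge weight is at least -W
    have hterm : ∀ i ∈ Finset.range m, -(W : ℤ) ≤ w (ρ i) (ρ (i + 1)) := by
      intro i _
      have h := abs_le.mp (hWmax _ _ (hρ.2.1 i))
      linarith [h.1]
    have h1 : (Finset.range m).card • (-(W : ℤ)) ≤ EL w ρ m :=
      Finset.sum_le_sum hterm |>.trans_eq' (by rw [Finset.sum_const])
    have h2 : (m : ℤ) * W ≤ ((n - 1) * W : ℕ) := by
      have : m * W ≤ (n - 1) * W := Nat.mul_le_mul_right W (Nat.le_sub_one_of_lt hm)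
      exact_mod_cast this
    simp only [Finset.card_range, nsmul_eq_mul, mul_neg] at h1
    linarith
  · -- pigeonhole: find a repeated state among ρ (m-n), ..., ρ m
    push_neg at hm
    obtain ⟨x, hx, y, hy, hxy, hρxy⟩ :
        ∃ x ∈ Finset.Icc (m - n) m, ∃ y ∈ Finset.Icc (m - n) m, x ≠ y ∧ ρ x = ρ y := by
      apply Finset.exists_ne_map_eq_of_card_lt_of_maps_to (t := Finset.univ)
      · rw [Nat.card_Icc, Finset.card_univ, hn]
        omega
      · intro _ _; exact Finset.mem_univ _
    simp only [Finset.mem_Icc] at hx hy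
    -- WLOG a < b
    obtain ⟨a, b, hab, hρab, ham, hbm⟩ :
        ∃ a b, a < b ∧ ρ a = ρ b ∧ m - n ≤ a ∧ b ≤ m := by
      rcases lt_or_gt_of_ne hxy with h | h
      · exact ⟨x, y, h, hρxy, hx.1, hy.2⟩
      · exact ⟨y, x, h, hρxy.symm, hy.1, hx.2⟩
    set k := b - a with hk_def
    have hk : 0 < k := Nat.sub_pos_of_lt hab
    have hab' : a + k = b := by omega
    set ρ' : ℕ → Q := fun j => if j < a then ρ j else ρ (j + k) with hρ'def
    have hval_le : ∀ j, j ≤ a → ρ' j = ρ j := by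
      intro j hj
      rcases lt_or_eq_of_le hj with h | h
      · simp [hρ'def, h]
      · subst h
        simp only [hρ'def, lt_irrefl, if_neg (lt_irrefl j)]
        rw [hab', ← hρab]
    have hval_ge : ∀ j, a ≤ j → ρ' j = ρ (j + k) := by
      intro j hj
      rcases lt_or_eq_of_le hj with h | h
      · simp [hρ'def, Nat.not_lt.mpr (le_of_lt h)]
      · subst h
        simp [hρ'def]
    have hρ' : MemlessOutcome Q1 E σ q ρ' := by
      refine ⟨by rw [hval_le 0 (Nat.zero_le a)]; exact hρ.1, ?_, ?_⟩
      · intro j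
        rcases le_or_gt (j + 1) a with h | h
        · rw [hval_le j (by omega), hval_le (j + 1) h]
          exact hρ.2.1 j
        · have hja : a ≤ j := by omega
          rw [hval_ge j hja, hval_ge (j + 1) (by omega)]
          have : j + 1 + k = j + k + 1 := by omega
          rw [this]
          exact hρ.2.1 (j + k)
      · intro j hj
        rcases le_or_gt (j + 1) a with h | h
        · rw [hval_le j (by omega)] at hj ⊢
          rw [hval_le (j + 1) h]
          exact hρ.2.2 j hj
        · have hja : a ≤ j := by omega
          rw [hval_ge j hja] at hj ⊢
          rw [hval_ge (j + 1) (by omega)]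
          have : j + 1 + k = j + k + 1 := by omega
          rw [this]
          exact hρ.2.2 (j + k) hj
    have hkm : k ≤ m := by omega
    have hmk_lt : m - k < m := by omega
    have hIH := ih (m - k) hmk_lt ρ' hρ'
    -- cycle sum is nonnegative
    have hcyc : 0 ≤ ∑ j ∈ Finset.Ico a b, w (ρ j) (ρ (j + 1)) := by
      have := hgfe ρ hρ a k hk (by rw [hab']; exact hρab)
      rw [hab'] at this
      rcases this with h | h
      · exact le_of_lt h
      · exact le_of_eq h.1.symm
    -- decompose the sums
    have hamk : a ≤ m - k := by omega
    have hsum : EL w ρ' (m - k) + ∑ j ∈ Finset.Ico a b, w (ρ j) (ρ (j + 1)) = EL w ρ m := by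
      have e0 : EL w ρ' (m - k) =
          ∑ j ∈ Finset.Ico 0 a, w (ρ' j) (ρ' (j + 1)) +
          ∑ j ∈ Finset.Ico a (m - k), w (ρ' j) (ρ' (j + 1)) := by
        rw [EL, Finset.range_eq_Ico, ← Finset.sum_Ico_consecutive _ (Nat.zero_le a) hamk]
      have e1 : ∑ j ∈ Finset.Ico 0 a, w (ρ' j) (ρ' (j + 1)) =
          ∑ j ∈ Finset.Ico 0 a, w (ρ j) (ρ (j + 1)) := by
        refine Finset.sum_congr rfl fun j hj => ?_
        simp only [Finset.mem_Ico] at hj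
        rw [hval_le j (le_of_lt hj.2), hval_le (j + 1) hj.2]
      have e2 : ∑ j ∈ Finset.Ico a (m - k), w (ρ' j) (ρ' (j + 1)) =
          ∑ j ∈ Finset.Ico b m, w (ρ j) (ρ (j + 1)) := by
        have e2a : ∑ j ∈ Finset.Ico a (m - k), w (ρ' j) (ρ' (j + 1)) =
            ∑ j ∈ Finset.Ico a (m - k), w (ρ (j + k)) (ρ (j + k + 1)) := by
          refine Finset.sum_congr rfl fun j hj => ?_
          simp only [Finset.mem_Ico] at hj
          have hj1 : a ≤ j + 1 := by omega
          rw [hval_ge j hj.1, hval_ge (j + 1) hj1]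
          have h12 : j + 1 + k = j + k + 1 := by omega
          rw [h12]
        rw [e2a]
        rw [Finset.sum_Ico_eq_sum_range, Finset.sum_Ico_eq_sum_range]
        have hmb : m - k - a = m - b := by omega
        rw [hmb]
        refine Finset.sum_congr rfl fun i _ => ?_
        have h1 : a + i + k = b + i := by omega
        rw [h1]
      have e3 : EL w ρ m =
          ∑ j ∈ Finset.Ico 0 a, w (ρ j) (ρ (j + 1)) +
          ∑ j ∈ Finset.Ico a b, w (ρ j) (ρ (j + 1)) +
          ∑ j ∈ Finset.Ico b m, w (ρ j) (ρ (j + 1)) := by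
        rw [EL, Finset.range_eq_Ico,
          ← Finset.sum_Ico_consecutive _ (Nat.zero_le b) hbm,
          ← Finset.sum_Ico_consecutive _ (Nat.zero_le a) (le_of_lt hab)]
      rw [e0, e1, e2, e3]
      ring
    linarith

/-- a memoryless strategy good-for-energy in `q` keeps the energy level of
every prefix of every outcome from `q` at least `−(n−1)·W`; in particular it satisfies
the energy condition from `q` with initial credit `(n−1)·W`. -/
theorem stmt9 {Q : Type*} [Fintype Q] (Q1 : Set Q) (E : Q → Q → Prop)
    (hE : ∀ q, ∃ q', E q q') (p : Q → ℕ) (w : Q → Q → ℤ)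
    (n W : ℕ) (hn : Fintype.card Q = n)
    (hWmax : ∀ q q', E q q' → |w q q'| ≤ (W : ℤ))
    (σ : Q → Q) (hσ : ∀ s ∈ Q1, E s (σ s)) (q : Q)
    (hgfe : GoodForEnergy Q1 E p w σ q) :
    ∀ ρ, MemlessOutcome Q1 E σ q ρ →
      (∀ m, -((((n - 1) * W : ℕ)) : ℤ) ≤ EL w ρ m) ∧
        EnergyCond w ((n - 1) * W) ρ := by
  intro ρ hρ
  have key := stmt9_key Q1 E p w n W hn hWmax σ q hgfe
  refine ⟨fun m => key m ρ hρ, fun m => ?_⟩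
  have := key m ρ hρ
  linarith
end

section
/- Let ⟨G,p,w⟩ be an energy Büchi game (priorities in {0,1}) with n states and largest absolute weight W ≥ 1, and let Win ⊆ Q be a set of states such that every edge from a player-2 state of Win stays in Win. Suppose there exist: (i) a memoryless strategy σ_gfe whose choices at player-1 states of Win stay in Win and which is good-for-energy in every state of Win, and (ii) a memoryless strategy σ_b whose choices at player-1 states of Win stay in Win and such that every play from a state of Win consistent with σ_b and remaining in Win visits a state of priority 0 within the first n−1 steps. Then player 1 wins the energy Büchi game (energy parity objective) from every state of Win with initial credit (n−1)·W. -/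
variable {Q : Type*}

set_option linter.unusedSectionVars false

section
variable {Q : Type*} (Q1 : Set Q) (E : Q → Q → Prop) (Win : Set Q)

open Classical in
noncomputable def fstep (hE : ∀ q, ∃ q', E q q') (τ : Q → Q) (q : Q) : Q :=
  if q ∈ Q1 ∧ q ∈ Win then τ q else Classical.choose (hE q)

variable (hE : ∀ q, ∃ q', E q q') (τ : Q → Q)
  (hτ : ∀ q ∈ Win, q ∈ Q1 → E q (τ q) ∧ τ q ∈ Win)
  (hclosed : ∀ q ∈ Win, q ∉ Q1 → ∀ q', E q q' → q' ∈ Win)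

include hτ hclosed

lemma fstep_edge (q : Q) : E q (fstep Q1 E Win hE τ q) := by
  unfold fstep
  split
  · exact (hτ q (by tauto) (by tauto)).1
  · exact Classical.choose_spec (hE q)

lemma fstep_win (q : Q) (hq : q ∈ Win) : fstep Q1 E Win hE τ q ∈ Win := by
  unfold fstep
  split
  · exact (hτ q (by tauto) (by tauto)).2
  · next h =>
    by_cases h1 : q ∈ Q1
    · exact absurd ⟨h1, hq⟩ h
    · exact hclosed q hq h1 _ (Classical.choose_spec (hE q))

lemma fstep_eq (q : Q) (hq : q ∈ Win) (h1 : q ∈ Q1) : fstep Q1 E Win hE τ q = τ q := by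
  unfold fstep; rw [if_pos ⟨h1, hq⟩]

/-- extend the segment `ρ s, …, ρ m` to an infinite play following `τ`. -/
noncomputable def glue (ρ : ℕ → Q) (s m : ℕ) : ℕ → Q :=
  fun t => if s + t ≤ m then ρ (s + t) else (fstep Q1 E Win hE τ)^[s + t - m] (ρ m)

lemma glue_eq (ρ : ℕ → Q) (s m t : ℕ) (h : s + t ≤ m) :
    glue Q1 E Win hE τ ρ s m t = ρ (s + t) := if_pos h

lemma glue_outcome (ρ : ℕ → Q) (s m : ℕ) (hsm : s ≤ m)
    (hplay : IsPlay E ρ) (hwin : ∀ t, ρ t ∈ Win)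
    (hcons : ∀ j, s ≤ j → j < m → ρ j ∈ Q1 → ρ (j + 1) = τ (ρ j)) :
    MemlessOutcome Q1 E τ (ρ s) (glue Q1 E Win hE τ ρ s m) ∧
      ∀ t, glue Q1 E Win hE τ ρ s m t ∈ Win := by
  set f := fstep Q1 E Win hE τ with hf
  set g := glue Q1 E Win hE τ ρ s m with hg
  have hgwin : ∀ t, g t ∈ Win := by
    intro t
    rw [hg]; unfold glue
    split
    · exact hwin _
    · rw [← hf]
      generalize s + t - m = k
      induction k with
      | zero => exact hwin m
      | succ k ih => rw [Function.iterate_succ_apply']; exact fstep_win Q1 E Win hE τ hτ hclosed _ ih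
  have hstep : ∀ t, g (t + 1) = if s + t < m then ρ (s + t + 1) else f (g t) := by
    intro t
    by_cases h1 : s + t < m
    · have e1 : g (t + 1) = ρ (s + (t + 1)) :=
        glue_eq Q1 E Win hE τ hτ hclosed ρ s m (t + 1) (by omega)
      rw [if_pos h1, e1]
      congr 1
    · rw [if_neg h1]
      by_cases h2 : s + t = m
      · have e1 : g (t + 1) = f (ρ m) := by
          rw [hg]; unfold glue
          rw [if_neg (by omega), show s + (t + 1) - m = 1 from by omega]
          rw [Function.iterate_one, hf]
        have e2 : g t = ρ m := by
          rw [hg, glue_eq Q1 E Win hE τ hτ hclosed ρ s m t (by omega), h2]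
        rw [e1, e2]
      · have e1 : g (t + 1) = f (g t) := by
          rw [hg]; unfold glue
          rw [if_neg (by omega), if_neg (by omega),
            show s + (t + 1) - m = (s + t - m) + 1 from by omega,
            Function.iterate_succ_apply']
        exact e1
  refine ⟨⟨?_, ?_, ?_⟩, hgwin⟩
  · rw [hg]; unfold glue; rw [if_pos (by omega), Nat.add_zero]
  · intro t
    rw [hstep t]
    split
    · next h1 =>
      have : g t = ρ (s + t) := glue_eq Q1 E Win hE τ hτ hclosed ρ s m t (by omega)
      rw [this]; exact hplay (s + t)
    · exact fstep_edge Q1 E Win hE τ hτ hclosed _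
  · intro t ht1
    rw [hstep t]
    split
    · next h1 =>
      have he : g t = ρ (s + t) := glue_eq Q1 E Win hE τ hτ hclosed ρ s m t (by omega)
      rw [he]
      rw [he] at ht1
      exact hcons _ (by omega) h1 ht1
    · rw [hf]
      exact fstep_eq Q1 E Win hE τ hτ hclosed _ (hgwin t) ht1

end


section SEG
variable {Q : Type*} [Fintype Q] (Q1 : Set Q) (E : Q → Q → Prop) (Win : Set Q)
  (hE : ∀ q, ∃ q', E q q') (p : Q → ℕ) (w : Q → Q → ℤ) (σg : Q → Q)
  (hτ : ∀ q ∈ Win, q ∈ Q1 → E q (σg q) ∧ σg q ∈ Win)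
  (hclosed : ∀ q ∈ Win, q ∉ Q1 → ∀ q', E q q' → q' ∈ Win)
  (hgfe : ∀ q ∈ Win, GoodForEnergy Q1 E p w σg q)
  (hp : ∀ q, p q = 0 ∨ p q = 1)

include hE hτ hclosed hgfe hp in
lemma cycle_pos (ρ : ℕ → Q) (s m i k : ℕ)
    (hplay : IsPlay E ρ) (hwin : ∀ t, ρ t ∈ Win)
    (hcons : ∀ j, s ≤ j → j < m → ρ j ∈ Q1 → ρ (j + 1) = σg (ρ j))
    (hsi : s ≤ i) (hk : 0 < k) (hikm : i + k ≤ m) (hcyc : ρ i = ρ (i + k)) :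
    0 < ∑ j ∈ Finset.Ico i (i + k), w (ρ j) (ρ (j + 1)) ∨
      (∑ j ∈ Finset.Ico i (i + k), w (ρ j) (ρ (j + 1)) = 0 ∧
        ∃ l ≤ k, p (ρ (i + l)) = 0) := by
  obtain ⟨hout, hwing⟩ := glue_outcome Q1 E Win hE σg hτ hclosed ρ i m (by omega)
    hplay hwin (fun j hj1 hj2 => hcons j (hsi.trans hj1) hj2)
  set g := glue Q1 E Win hE σg ρ i m with hgdef
  have hg0 : ∀ t, i + t ≤ m → g t = ρ (i + t) := fun t ht =>
    glue_eq Q1 E Win hE σg hτ hclosed ρ i m t ht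
  have h0k : g 0 = g (0 + k) := by
    rw [hg0 0 (by omega), hg0 (0 + k) (by omega)]
    rw [Nat.add_zero, Nat.zero_add]
    exact hcyc
  have hmain := hgfe (ρ i) (hwin i) g hout 0 k hk h0k
  have hsum : ∑ j ∈ Finset.Ico 0 (0 + k), w (g j) (g (j + 1)) =
      ∑ j ∈ Finset.Ico i (i + k), w (ρ j) (ρ (j + 1)) := by
    rw [Finset.sum_Ico_eq_sum_range, Finset.sum_Ico_eq_sum_range]
    have hr : 0 + k - 0 = i + k - i := by omega
    rw [hr]
    apply Finset.sum_congr rfl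
    intro j hj
    have hjk : j < k := by
      simpa using Finset.mem_range.mp (by simpa [Nat.add_sub_cancel_left] using hj)
    have e1 : g (0 + j) = ρ (i + j) := by
      rw [show (0 + j) = j from by omega, hg0 j (by omega)]
    have e2 : g (0 + j + 1) = ρ (i + j + 1) := by
      rw [show (0 + j + 1) = j + 1 from by omega, hg0 (j + 1) (by omega)]
      congr 1
    rw [e1, e2]
  rcases hmain with h | ⟨h0, hmin⟩
  · left; rwa [hsum] at h
  · right
    refine ⟨by rwa [hsum] at h0, ?_⟩
    obtain ⟨j, hj, hev, -⟩ := hmin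
    have hjk : j ≤ k := by
      have := Finset.mem_Icc.mp hj; omega
    have e1 : g j = ρ (i + j) := hg0 j (by omega)
    rw [e1] at hev
    refine ⟨j, hjk, ?_⟩
    rcases hp (ρ (i + j)) with h0' | h1'
    · exact h0'
    · rw [h1'] at hev; exact absurd hev (by decide)
end SEG


section SPL
variable {Q : Type*} (Q1 : Set Q) (E : Q → Q → Prop) (Win : Set Q)
  (w : Q → Q → ℤ) (σg : Q → Q)

/-- splice out the cycle `[i, i+k)`. -/
def spl (ρ : ℕ → Q) (i k : ℕ) : ℕ → Q := fun t => if t < i then ρ t else ρ (t + k)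

lemma spl_facts (ρ : ℕ → Q) (s m i k : ℕ)
    (hplay : IsPlay E ρ) (hwin : ∀ t, ρ t ∈ Win)
    (hcons : ∀ j, s ≤ j → j < m → ρ j ∈ Q1 → ρ (j + 1) = σg (ρ j))
    (hsi : s ≤ i) (hk : 0 < k) (hikm : i + k ≤ m) (hcyc : ρ i = ρ (i + k)) :
    IsPlay E (spl ρ i k) ∧ (∀ t, spl ρ i k t ∈ Win) ∧
      (∀ j, s ≤ j → j < m - k → spl ρ i k j ∈ Q1 →
        spl ρ i k (j + 1) = σg (spl ρ i k j)) ∧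
      (∑ t ∈ Finset.Ico s (m - k), w (spl ρ i k t) (spl ρ i k (t + 1))) +
        (∑ t ∈ Finset.Ico i (i + k), w (ρ t) (ρ (t + 1))) =
        ∑ t ∈ Finset.Ico s m, w (ρ t) (ρ (t + 1)) := by
  have hval : ∀ t, (t < i ∧ spl ρ i k t = ρ t) ∨ (i ≤ t ∧ spl ρ i k t = ρ (t + k)) := by
    intro t
    by_cases h : t < i
    · exact Or.inl ⟨h, if_pos h⟩
    · exact Or.inr ⟨by omega, if_neg h⟩
  -- the edge from position t of spl is the edge from position t (t+1 ≤ i uses hcyc) or t+k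
  have hedge : ∀ t, (t + 1 ≤ i ∧ spl ρ i k t = ρ t ∧ spl ρ i k (t + 1) = ρ (t + 1)) ∨
      (i ≤ t ∧ spl ρ i k t = ρ (t + k) ∧ spl ρ i k (t + 1) = ρ (t + k + 1)) := by
    intro t
    by_cases h : t + 1 ≤ i
    · left
      refine ⟨h, if_pos (by omega), ?_⟩
      by_cases h2 : t + 1 < i
      · exact if_pos h2
      · have h3 : t + 1 = i := by omega
        unfold spl
        rw [if_neg (by omega), h3, ← hcyc]
    · right
      refine ⟨by omega, if_neg (by omega), ?_⟩
      unfold spl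
      rw [if_neg (by omega)]
      congr 1
      omega
  refine ⟨?_, ?_, ?_, ?_⟩
  · intro t
    rcases hedge t with ⟨h1, e1, e2⟩ | ⟨h1, e1, e2⟩
    · rw [e1, e2]; exact hplay t
    · rw [e1, e2]; exact hplay (t + k)
  · intro t
    rcases hval t with ⟨_, e⟩ | ⟨_, e⟩ <;> rw [e] <;> exact hwin _
  · intro j hj1 hj2 hj3
    rcases hedge j with ⟨h1, e1, e2⟩ | ⟨h1, e1, e2⟩
    · rw [e1] at hj3 ⊢
      rw [e2]
      exact hcons j hj1 (by omega) hj3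
    · rw [e1] at hj3 ⊢
      rw [e2]
      exact hcons (j + k) (by omega) (by omega) hj3
  · have hsplit : ∑ t ∈ Finset.Ico s m, w (ρ t) (ρ (t + 1)) =
        (∑ t ∈ Finset.Ico s i, w (ρ t) (ρ (t + 1))) +
        (∑ t ∈ Finset.Ico i (i + k), w (ρ t) (ρ (t + 1))) +
        (∑ t ∈ Finset.Ico (i + k) m, w (ρ t) (ρ (t + 1))) := by
      rw [← Finset.sum_Ico_consecutive _ (by omega : s ≤ i) (by omega : i ≤ m)]
      rw [← Finset.sum_Ico_consecutive _ (by omega : i ≤ i + k) (by omega : i + k ≤ m)]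
      ring
    have hsplit2 : ∑ t ∈ Finset.Ico s (m - k), w (spl ρ i k t) (spl ρ i k (t + 1)) =
        (∑ t ∈ Finset.Ico s i, w (spl ρ i k t) (spl ρ i k (t + 1))) +
        (∑ t ∈ Finset.Ico i (m - k), w (spl ρ i k t) (spl ρ i k (t + 1))) := by
      rw [← Finset.sum_Ico_consecutive _ (by omega : s ≤ i) (by omega : i ≤ m - k)]
    have h1 : ∑ t ∈ Finset.Ico s i, w (spl ρ i k t) (spl ρ i k (t + 1)) =
        ∑ t ∈ Finset.Ico s i, w (ρ t) (ρ (t + 1)) := by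
      apply Finset.sum_congr rfl
      intro t ht
      have ht2 := Finset.mem_Ico.mp ht
      rcases hedge t with ⟨h1, e1, e2⟩ | ⟨h1, e1, e2⟩
      · rw [e1, e2]
      · omega
    have h2 : ∑ t ∈ Finset.Ico i (m - k), w (spl ρ i k t) (spl ρ i k (t + 1)) =
        ∑ t ∈ Finset.Ico (i + k) m, w (ρ t) (ρ (t + 1)) := by
      rw [Finset.sum_Ico_eq_sum_range, Finset.sum_Ico_eq_sum_range]
      rw [show m - k - i = m - (i + k) from by omega]
      apply Finset.sum_congr rfl
      intro t ht
      rcases hedge (i + t) with ⟨h1, e1, e2⟩ | ⟨h1, e1, e2⟩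
      · omega
      · rw [e1, e2]
        congr 2 <;> omega
    rw [hsplit2, h1, h2, hsplit]
    ring
end SPL


section SEG2
variable {Q : Type*} [Fintype Q] (Q1 : Set Q) (E : Q → Q → Prop) (Win : Set Q)
  (hE : ∀ q, ∃ q', E q q') (p : Q → ℕ) (w : Q → Q → ℤ) (σg : Q → Q)
  (hτ : ∀ q ∈ Win, q ∈ Q1 → E q (σg q) ∧ σg q ∈ Win)
  (hclosed : ∀ q ∈ Win, q ∉ Q1 → ∀ q', E q q' → q' ∈ Win)
  (hgfe : ∀ q ∈ Win, GoodForEnergy Q1 E p w σg q)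
  (hp : ∀ q, p q = 0 ∨ p q = 1)
  (n W : ℕ) (hn : Fintype.card Q = n) (hW : 1 ≤ W)
  (hWmax : ∀ q q', E q q' → |w q q'| ≤ (W : ℤ))

include hWmax in
lemma seg_lb (ρ : ℕ → Q) (s m : ℕ) (hplay : IsPlay E ρ) :
    -(((m - s : ℕ) : ℤ) * W) ≤ ∑ t ∈ Finset.Ico s m, w (ρ t) (ρ (t + 1)) := by
  have h1 : ∀ t ∈ Finset.Ico s m, -(W : ℤ) ≤ w (ρ t) (ρ (t + 1)) := by
    intro t _
    have := (abs_le.mp (hWmax _ _ (hplay t))).1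
    linarith
  have h2 := Finset.card_nsmul_le_sum _ _ _ h1
  rw [Nat.card_Ico] at h2
  have h3 : (m - s : ℕ) • (-(W : ℤ)) = -(((m - s : ℕ) : ℤ) * W) := by
    rw [nsmul_eq_mul]; ring
  linarith [h3 ▸ h2]

include hE hτ hclosed hgfe hp hn hW hWmax in
lemma segA : ∀ L (ρ : ℕ → Q) (s m : ℕ), m - s = L → IsPlay E ρ → (∀ t, ρ t ∈ Win) →
    (∀ j, s ≤ j → j < m → ρ j ∈ Q1 → ρ (j + 1) = σg (ρ j)) →
    -(((n : ℤ) - 1) * W) ≤ ∑ t ∈ Finset.Ico s m, w (ρ t) (ρ (t + 1)) := by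
  intro L
  induction L using Nat.strong_induction_on with
  | _ L IH =>
  intro ρ s m hL hplay hwin hcons
  have hn1 : 1 ≤ n := hn ▸ Fintype.card_pos_iff.mpr ⟨ρ 0⟩
  by_cases hsm : m - s < n
  · have hlb := seg_lb (E := E) (w := w) (W := W) hWmax ρ s m hplay
    have hms : ((m - s : ℕ) : ℤ) ≤ (n : ℤ) - 1 := by omega
    have hWn : (0 : ℤ) ≤ (W : ℤ) := by positivity
    nlinarith [hlb, hms, hWn]
  · have hcard : Fintype.card Q < Fintype.card (Fin (n + 1)) := by simp [hn]
    obtain ⟨a, b, hab, heq⟩ :=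
      Fintype.exists_ne_map_eq_of_card_lt (fun t : Fin (n + 1) => ρ (s + t)) hcard
    have hne : (a : ℕ) ≠ b := fun h => hab (Fin.ext h)
    set i := s + min (a : ℕ) (b : ℕ) with hi
    set k := max (a : ℕ) (b : ℕ) - min (a : ℕ) (b : ℕ) with hkdef
    have hk : 0 < k := by omega
    have hik : i + k ≤ m := by
      have := a.isLt; have := b.isLt; omega
    have hcyc : ρ i = ρ (i + k) := by
      have h2 : i + k = s + max (a : ℕ) (b : ℕ) := by omega
      rw [h2, hi]
      rcases le_total (a : ℕ) (b : ℕ) with h | h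
      · rw [min_eq_left h, max_eq_right h]; exact heq
      · rw [min_eq_right h, max_eq_left h]; exact heq.symm
    obtain ⟨hplay', hwin', hcons', hsum⟩ :=
      spl_facts Q1 E Win w σg ρ s m i k hplay hwin hcons (by omega) hk hik hcyc
    have hcycpos := cycle_pos Q1 E Win hE p w σg hτ hclosed hgfe hp ρ s m i k
      hplay hwin hcons (by omega) hk hik hcyc
    have hcyc0 : 0 ≤ ∑ t ∈ Finset.Ico i (i + k), w (ρ t) (ρ (t + 1)) := by
      rcases hcycpos with h | ⟨h, -⟩ <;> linarith
    have hIH := IH (m - k - s) (by omega) (spl ρ i k) s (m - k) rfl hplay' hwin' hcons'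
    linarith [hIH, hcyc0, hsum]

include hE hτ hclosed hgfe hp hn hW hWmax in
lemma segB : ∀ L (ρ : ℕ → Q) (s m : ℕ), m - s = L → IsPlay E ρ → (∀ t, ρ t ∈ Win) →
    (∀ j, s ≤ j → j < m → ρ j ∈ Q1 → ρ (j + 1) = σg (ρ j)) →
    (∀ t, s ≤ t → t ≤ m → p (ρ t) ≠ 0) →
    (m : ℤ) - (s : ℤ) ≤ (n : ℤ) * (∑ t ∈ Finset.Ico s m, w (ρ t) (ρ (t + 1))) +
      (n : ℤ) * ((n : ℤ) - 1) * (W : ℤ) + ((n : ℤ) - 1) := by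
  intro L
  induction L using Nat.strong_induction_on with
  | _ L IH =>
  intro ρ s m hL hplay hwin hcons hnp0
  have hn1 : 1 ≤ n := hn ▸ Fintype.card_pos_iff.mpr ⟨ρ 0⟩
  have hWn : (1 : ℤ) ≤ (W : ℤ) := by exact_mod_cast hW
  by_cases hsm0 : m ≤ s
  · have : Finset.Ico s m = ∅ := Finset.Ico_eq_empty (by omega)
    rw [this]
    simp only [Finset.sum_empty, mul_zero]
    have e : 0 ≤ (n:ℤ) * ((n:ℤ) - 1) * (W:ℤ) :=
      mul_nonneg (mul_nonneg (by omega) (by omega)) (by positivity)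
    have : (m:ℤ) - s ≤ 0 := by omega
    linarith
  by_cases hsm : m - s < n
  · have hlb := seg_lb (E := E) (w := w) (W := W) hWmax ρ s m hplay
    have hms : ((m - s : ℕ) : ℤ) ≤ (n : ℤ) - 1 := by omega
    have hms2 : ((m - s : ℕ) : ℤ) = (m : ℤ) - s := by omega
    rw [hms2] at hlb hms
    set S := ∑ t ∈ Finset.Ico s m, w (ρ t) (ρ (t + 1)) with hS
    have e1 : 0 ≤ (n : ℤ) * (S + ((m : ℤ) - s) * W) := by
      apply mul_nonneg (by omega)
      linarith
    have e2 : 0 ≤ (n : ℤ) * (W : ℤ) * (((n : ℤ) - 1) - ((m : ℤ) - s)) := by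
      apply mul_nonneg (by positivity)
      linarith
    nlinarith [e1, e2, hms]
  · have hcard : Fintype.card Q < Fintype.card (Fin (n + 1)) := by simp [hn]
    obtain ⟨a, b, hab, heq⟩ :=
      Fintype.exists_ne_map_eq_of_card_lt (fun t : Fin (n + 1) => ρ (s + t)) hcard
    have hne : (a : ℕ) ≠ b := fun h => hab (Fin.ext h)
    set i := s + min (a : ℕ) (b : ℕ) with hi
    set k := max (a : ℕ) (b : ℕ) - min (a : ℕ) (b : ℕ) with hkdef
    have hk : 0 < k := by omega
    have hkn : k ≤ n := by
      have := a.isLt; have := b.isLt; omega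
    have hik : i + k ≤ m := by
      have := a.isLt; have := b.isLt; omega
    have hcyc : ρ i = ρ (i + k) := by
      have h2 : i + k = s + max (a : ℕ) (b : ℕ) := by omega
      rw [h2, hi]
      rcases le_total (a : ℕ) (b : ℕ) with h | h
      · rw [min_eq_left h, max_eq_right h]; exact heq
      · rw [min_eq_right h, max_eq_left h]; exact heq.symm
    obtain ⟨hplay', hwin', hcons', hsum⟩ :=
      spl_facts Q1 E Win w σg ρ s m i k hplay hwin hcons (by omega) hk hik hcyc
    have hcycpos := cycle_pos Q1 E Win hE p w σg hτ hclosed hgfe hp ρ s m i k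
      hplay hwin hcons (by omega) hk hik hcyc
    have hcyc1 : 1 ≤ ∑ t ∈ Finset.Ico i (i + k), w (ρ t) (ρ (t + 1)) := by
      rcases hcycpos with h | ⟨h, l, hl, hpl⟩
      · omega
      · exact absurd hpl (hnp0 (i + l) (by omega) (by omega))
    have hnp0' : ∀ t, s ≤ t → t ≤ m - k → p (spl ρ i k t) ≠ 0 := by
      intro t ht1 ht2
      unfold spl
      split
      · exact hnp0 t ht1 (by omega)
      · exact hnp0 (t + k) (by omega) (by omega)
    have hIH := IH (m - k - s) (by omega) (spl ρ i k) s (m - k) rfl hplay' hwin' hcons' hnp0'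
    have hcast : ((m - k : ℕ) : ℤ) = (m : ℤ) - k := by omega
    rw [hcast] at hIH
    have hnk : (k : ℤ) ≤ (n : ℤ) := by omega
    set S := ∑ t ∈ Finset.Ico s m, w (ρ t) (ρ (t + 1)) with hS
    set S' := ∑ t ∈ Finset.Ico s (m - k), w (spl ρ i k t) (spl ρ i k (t + 1)) with hS'
    set C := ∑ t ∈ Finset.Ico i (i + k), w (ρ t) (ρ (t + 1)) with hC
    have hmul : (n : ℤ) * 1 ≤ (n : ℤ) * C := by
      apply mul_le_mul_of_nonneg_left hcyc1 (by omega)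
    nlinarith [hIH, hsum, hmul, hnk]
end SEG2


section MODE
variable {Q : Type*} (p : Q → ℕ) (w : Q → Q → ℤ) (T c : ℤ)

def mstep (m : Bool) (e : ℤ) (q : Q) : Bool :=
  if p q = 0 then true else m && decide (e < T)

def runStep (acc : Bool × ℤ × Q) (q : Q) : Bool × ℤ × Q :=
  (mstep p T acc.1 (acc.2.1 + w acc.2.2 q) q, acc.2.1 + w acc.2.2 q, q)

def runPrefix (q₀ : Q) (l : List Q) : Bool × ℤ × Q :=
  l.foldl (runStep p w T) (mstep p T true c q₀, c, q₀)

def modeOf (h : List Q) (q : Q) : Bool :=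
  match h with
  | [] => mstep p T true c q
  | q₀ :: rest => (runPrefix p w T c q₀ (rest ++ [q])).1

def stRun (ρ : ℕ → Q) (i : ℕ) : Bool × ℤ × Q :=
  runPrefix p w T c (ρ 0) ((List.range i).map (fun t => ρ (t + 1)))

lemma stRun_zero (ρ : ℕ → Q) :
    stRun p w T c ρ 0 = (mstep p T true c (ρ 0), c, ρ 0) := by
  simp [stRun, runPrefix]

lemma stRun_succ (ρ : ℕ → Q) (i : ℕ) :
    stRun p w T c ρ (i + 1) = runStep p w T (stRun p w T c ρ i) (ρ (i + 1)) := by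
  unfold stRun
  rw [List.range_succ, List.map_append]
  simp [runPrefix, List.foldl_append]

lemma stRun_q (ρ : ℕ → Q) (i : ℕ) : (stRun p w T c ρ i).2.2 = ρ i := by
  induction i with
  | zero => simp [stRun_zero]
  | succ k ih => rw [stRun_succ]; simp [runStep]

lemma stRun_e_succ (ρ : ℕ → Q) (i : ℕ) :
    (stRun p w T c ρ (i + 1)).2.1 = (stRun p w T c ρ i).2.1 + w (ρ i) (ρ (i + 1)) := by
  rw [stRun_succ]
  simp [runStep, stRun_q]

lemma stRun_m_succ (ρ : ℕ → Q) (i : ℕ) :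
    (stRun p w T c ρ (i + 1)).1 =
      mstep p T (stRun p w T c ρ i).1 ((stRun p w T c ρ (i + 1)).2.1) (ρ (i + 1)) := by
  conv_lhs => rw [stRun_succ]
  rw [stRun_e_succ]
  simp [runStep, stRun_q]

lemma modeOf_hist (ρ : ℕ → Q) (i : ℕ) :
    modeOf p w T c (Hist ρ i) (ρ i) = (stRun p w T c ρ i).1 := by
  cases i with
  | zero => simp [Hist, modeOf, stRun, runPrefix]
  | succ k =>
    have h1 : Hist ρ (k + 1) = ρ 0 :: (List.range k).map (fun t => ρ (t + 1)) := by
      unfold Hist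
      rw [List.range_succ_eq_map, List.map_cons, List.map_map]
      rfl
    have h2 : ((List.range k).map (fun t => ρ (t + 1))) ++ [ρ (k + 1)] =
        (List.range (k + 1)).map (fun t => ρ (t + 1)) := by
      rw [List.range_succ, List.map_append]
      rfl
    rw [h1]
    show (runPrefix p w T c (ρ 0) ((List.range k).map (fun t => ρ (t + 1)) ++ [ρ (k + 1)])).1 =
      (stRun p w T c ρ (k + 1)).1
    rw [h2]
    rfl

end MODE

/-- in an energy Büchi game (priorities in `{0,1}`), if `Win` is closed
under player-2 edges and there are memoryless strategies `σgfe` (staying in `Win`,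
good-for-energy in every state of `Win`) and `σb` (staying in `Win`, forcing a visit to a
priority-0 state within the first `n−1` steps along plays remaining in `Win`), then
player 1 wins the energy parity objective from every state of `Win` with initial credit
`(n−1)·W`. -/
theorem stmt10 {Q : Type*} [Fintype Q] (Q1 : Set Q) (E : Q → Q → Prop)
    (hE : ∀ q, ∃ q', E q q') (p : Q → ℕ) (w : Q → Q → ℤ)
    (hp : ∀ q, p q = 0 ∨ p q = 1)
    (n W : ℕ) (hn : Fintype.card Q = n) (hW : 1 ≤ W)
    (hWmax : ∀ q q', E q q' → |w q q'| ≤ (W : ℤ))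
    (Win : Set Q)
    (hclosed : ∀ q ∈ Win, q ∉ Q1 → ∀ q', E q q' → q' ∈ Win)
    (σgfe : Q → Q)
    (hgfe_valid : ∀ q ∈ Win, q ∈ Q1 → E q (σgfe q) ∧ σgfe q ∈ Win)
    (hgfe : ∀ q ∈ Win, GoodForEnergy Q1 E p w σgfe q)
    (σb : Q → Q)
    (hb_valid : ∀ q ∈ Win, q ∈ Q1 → E q (σb q) ∧ σb q ∈ Win)
    (hb : ∀ ρ : ℕ → Q, ρ 0 ∈ Win → IsPlay E ρ → (∀ i, ρ i ∈ Win) →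
      (∀ i, ρ i ∈ Q1 → ρ (i + 1) = σb (ρ i)) → ∃ i ≤ n - 1, p (ρ i) = 0) :
    ∀ q ∈ Win, ∃ σ : List Q → Q → Q, IsStrategy Q1 E σ ∧
      ∀ ρ, IsOutcome Q1 E σ q ρ → ParityCond p ρ ∧ EnergyCond w ((n - 1) * W) ρ := by
  
  classical
  intro q₀ hq₀
  have hn1 : 1 ≤ n := hn ▸ Fintype.card_pos_iff.mpr ⟨q₀⟩
  have hWz : (1 : ℤ) ≤ (W : ℤ) := by exact_mod_cast hW
  set cz : ℤ := ((n : ℤ) - 1) * (W : ℤ) with hcz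
  have hczn : 0 ≤ cz := mul_nonneg (by omega) (by positivity)
  have hcredit : (((n - 1) * W : ℕ) : ℤ) = cz := by
    rw [hcz, Nat.cast_mul, show ((n - 1 : ℕ) : ℤ) = (n : ℤ) - 1 from by omega]
  set T : ℤ := 2 * cz with hT
  -- helper facts about mstep
  have hmstep_false : ∀ (b : Bool) (x : ℤ) (q : Q), mstep p T b x q = false →
      p q ≠ 0 ∧ (b = true → T ≤ x) := by
    intro b x q h
    unfold mstep at h
    by_cases hp0 : p q = 0
    · rw [if_pos hp0] at h; exact absurd h (by simp)
    · rw [if_neg hp0] at h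
      refine ⟨hp0, fun hb' => ?_⟩
      rw [hb'] at h
      simpa using h
  have hmstep_true : ∀ (b : Bool) (x : ℤ) (q : Q), mstep p T b x q = true →
      p q ≠ 0 → b = true ∧ x < T := by
    intro b x q h hp0
    unfold mstep at h
    rw [if_neg hp0] at h
    simpa using h
  refine ⟨fun h q => if q ∈ Win then
      (if modeOf p w T cz h q then σgfe q else σb q) else Classical.choose (hE q), ?_, ?_⟩
  · intro h q hq1
    beta_reduce
    by_cases hqw : q ∈ Win
    · rw [if_pos hqw]
      by_cases hm : modeOf p w T cz h q
      · rw [if_pos hm]; exact (hgfe_valid q hqw hq1).1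
      · rw [if_neg hm]; exact (hb_valid q hqw hq1).1
    · rw [if_neg hqw]; exact Classical.choose_spec (hE q)
  · rintro ρ ⟨hρ0, hplay, hout⟩
    set st : ℕ → Bool × ℤ × Q := stRun p w T cz ρ with hst
    have he0 : (st 0).2.1 = cz := by rw [hst, stRun_zero]
    have hm0 : (st 0).1 = mstep p T true cz (ρ 0) := by rw [hst, stRun_zero]
    have hesucc : ∀ i, (st (i + 1)).2.1 = (st i).2.1 + w (ρ i) (ρ (i + 1)) := by
      intro i; rw [hst]; exact stRun_e_succ p w T cz ρ i
    have hmsucc : ∀ i, (st (i + 1)).1 = mstep p T (st i).1 ((st (i + 1)).2.1) (ρ (i + 1)) := by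
      intro i; rw [hst]; exact stRun_m_succ p w T cz ρ i
    have hwin : ∀ i, ρ i ∈ Win := by
      intro i
      induction i with
      | zero => rw [hρ0]; exact hq₀
      | succ k ih =>
        by_cases hk1 : ρ k ∈ Q1
        · rw [hout k hk1]
          simp only [if_pos ih]
          split
          · exact (hgfe_valid _ ih hk1).2
          · exact (hb_valid _ ih hk1).2
        · exact hclosed _ ih hk1 _ (hplay k)
    have hmove : ∀ i, ρ i ∈ Q1 →
        ρ (i + 1) = if (st i).1 then σgfe (ρ i) else σb (ρ i) := by
      intro i hi1
      rw [hout i hi1]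
      simp only [if_pos (hwin i)]
      rw [modeOf_hist p w T cz ρ i, hst]
    have hmode_p0 : ∀ i, (st i).1 = false → p (ρ i) ≠ 0 := by
      intro i hfalse
      cases i with
      | zero => exact (hmstep_false _ _ _ (hm0 ▸ hfalse)).1
      | succ k => exact (hmstep_false _ _ _ ((hmsucc k) ▸ hfalse)).1
    have hEsum : ∀ s i, s ≤ i →
        (st i).2.1 = (st s).2.1 + ∑ t ∈ Finset.Ico s i, w (ρ t) (ρ (t + 1)) := by
      intro s i hsi
      induction i, hsi using Nat.le_induction with
      | base => simp
      | succ k hk ih =>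
        rw [hesucc k, ih, Finset.sum_Ico_succ_top hk]
        ring
    -- energy lower bound on gfe segments
    have hA : ∀ s i, s ≤ i → (∀ j, s ≤ j → j < i → (st j).1 = true) →
        -cz ≤ ∑ t ∈ Finset.Ico s i, w (ρ t) (ρ (t + 1)) := by
      intro s i hsi hmod
      have hcons : ∀ j, s ≤ j → j < i → ρ j ∈ Q1 → ρ (j + 1) = σgfe (ρ j) := by
        intro j hj1 hj2 hq1
        rw [hmove j hq1, hmod j hj1 hj2]
        simp
      rw [hcz]
      exact segA Q1 E Win hE p w σgfe hgfe_valid hclosed hgfe hp n W hn hW hWmax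
        (i - s) ρ s i rfl hplay hwin hcons
    -- b-phase: energy stays high
    have hEB : ∀ i,
        ((st i).1 = true → ∃ s, s ≤ i ∧ cz ≤ (st s).2.1 ∧
          (∀ j, s ≤ j → j ≤ i → (st j).1 = true)) →
        ((st i).1 = false → ∃ s, s ≤ i ∧ T ≤ (st s).2.1 ∧
          (∀ j, s ≤ j → j ≤ i → (st j).1 = false)) →
        (0 ≤ (st i).2.1 ∧ ((st i).1 = false → cz + W ≤ (st i).2.1)) := by
      intro i hinv1 hinv2
      cases hMi : (st i).1 with
      | true =>
        obtain ⟨s, hsi, hes, hmod⟩ := hinv1 hMi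
        have hsum := hA s i hsi (fun j hj1 hj2 => hmod j hj1 hj2.le)
        have heq := hEsum s i hsi
        exact ⟨by linarith, fun h => absurd h (by simp)⟩
      | false =>
        obtain ⟨s, hsi, hes, hmod⟩ := hinv2 hMi
        have hcons_b : ∀ j, s ≤ j → j < i → ρ j ∈ Q1 → ρ (j + 1) = σb (ρ j) := by
          intro j hj1 hj2 hq1
          rw [hmove j hq1, hmod j hj1 hj2.le]
          simp
        obtain ⟨hgout, hgwin⟩ := glue_outcome Q1 E Win hE σb hb_valid hclosed ρ s i hsi
          hplay hwin hcons_b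
        obtain ⟨hg0, hgplay, hgcons⟩ := hgout
        obtain ⟨t, htn, hpt⟩ := hb _ (hg0 ▸ hwin s) hgplay hgwin hgcons
        have hti : ¬ (s + t ≤ i) := by
          intro hle
          have hgt : glue Q1 E Win hE σb ρ s i t = ρ (s + t) :=
            glue_eq Q1 E Win hE σb hb_valid hclosed ρ s i t hle
          exact hmode_p0 (s + t) (hmod (s + t) (by omega) (by omega))
            (by rw [← hgt]; exact hpt)
        have hlen : (i : ℤ) - (s : ℤ) ≤ (n : ℤ) - 2 := by omega
        have hlb := seg_lb (E := E) (w := w) (W := W) hWmax ρ s i hplay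
        have heq := hEsum s i hsi
        have hcast : ((i - s : ℕ) : ℤ) = (i : ℤ) - s := by omega
        rw [hcast] at hlb
        have hmul : ((i : ℤ) - s) * W ≤ ((n : ℤ) - 2) * W :=
          mul_le_mul_of_nonneg_right hlen (by positivity)
        have h2 : cz + W ≤ (st i).2.1 := by
          rw [hcz]; rw [hT, hcz] at hes; nlinarith [hlb, heq, hes, hmul]
        exact ⟨by linarith, fun _ => h2⟩
    have hINV : ∀ i,
        ((st i).1 = true → ∃ s, s ≤ i ∧ cz ≤ (st s).2.1 ∧
          (∀ j, s ≤ j → j ≤ i → (st j).1 = true)) ∧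
        ((st i).1 = false → ∃ s, s ≤ i ∧ T ≤ (st s).2.1 ∧
          (∀ j, s ≤ j → j ≤ i → (st j).1 = false)) := by
      intro i
      induction i with
      | zero =>
        constructor
        · intro h
          exact ⟨0, le_refl _, by rw [he0],
            fun j hj1 hj2 => by rw [show j = 0 from by omega]; exact h⟩
        · intro h
          refine ⟨0, le_refl _, ?_,
            fun j hj1 hj2 => by rw [show j = 0 from by omega]; exact h⟩
          rw [he0]
          exact (hmstep_false _ _ _ (hm0 ▸ h)).2 rfl
      | succ k ih =>
        have hEBk := hEB k ih.1 ih.2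
        constructor
        · intro hMk1
          cases hMk : (st k).1 with
          | true =>
            obtain ⟨s, hs, hes, hmod⟩ := ih.1 hMk
            refine ⟨s, by omega, hes, fun j hj1 hj2 => ?_⟩
            rcases Nat.lt_or_ge j (k + 1) with h | h
            · exact hmod j hj1 (by omega)
            · rw [show j = k + 1 from by omega]; exact hMk1
          | false =>
            refine ⟨k + 1, le_refl _, ?_,
              fun j hj1 hj2 => by rw [show j = k + 1 from by omega]; exact hMk1⟩
            have h1 : cz + W ≤ (st k).2.1 := hEBk.2 hMk
            have h2 : -(W : ℤ) ≤ w (ρ k) (ρ (k + 1)) := by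
              have := (abs_le.mp (hWmax _ _ (hplay k))).1; linarith
            rw [hesucc k]; linarith
        · intro hMk1
          cases hMk : (st k).1 with
          | false =>
            obtain ⟨s, hs, hes, hmod⟩ := ih.2 hMk
            refine ⟨s, by omega, hes, fun j hj1 hj2 => ?_⟩
            rcases Nat.lt_or_ge j (k + 1) with h | h
            · exact hmod j hj1 (by omega)
            · rw [show j = k + 1 from by omega]; exact hMk1
          | true =>
            refine ⟨k + 1, le_refl _, ?_,
              fun j hj1 hj2 => by rw [show j = k + 1 from by omega]; exact hMk1⟩
            have h := hmstep_false _ _ _ ((hmsucc k) ▸ hMk1)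
            exact h.2 hMk
    have hEB' : ∀ i, 0 ≤ (st i).2.1 ∧ ((st i).1 = false → cz + W ≤ (st i).2.1) :=
      fun i => hEB i (hINV i).1 (hINV i).2
    -- infinitely many priority-0 visits
    have hclaim : ∀ N, ∃ i, N ≤ i ∧ p (ρ i) = 0 := by
      intro N
      by_contra hc
      push_neg at hc
      by_cases hex : ∃ s, N ≤ s ∧ (st s).1 = false
      · obtain ⟨s, hNs, hMs⟩ := hex
        have hall : ∀ t, (st (s + t)).1 = false := by
          intro t
          induction t with
          | zero => exact hMs
          | succ u ihu =>
            rw [show s + (u + 1) = (s + u) + 1 from rfl, hmsucc (s + u)]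
            unfold mstep
            rw [if_neg (hc _ (by omega)), ihu]
            simp
        obtain ⟨t, htn, hpt⟩ := hb (fun t => ρ (s + t)) (hwin s) (fun t => hplay (s + t))
          (fun t => hwin (s + t)) (fun t ht1 => by
            have := hmove (s + t) ht1
            rw [hall t] at this
            show ρ (s + t + 1) = σb (ρ (s + t))
            simpa using this)
        exact hc (s + t) (by omega) hpt
      · push_neg at hex
        simp only [Bool.not_eq_false] at hex
        have heT : ∀ j, N + 1 ≤ j → (st j).2.1 < T := by
          intro j hj
          obtain ⟨k, rfl⟩ : ∃ k, j = k + 1 := ⟨j - 1, by omega⟩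
          have h := hmstep_true _ _ _ ((hmsucc k).symm.trans (hex _ (by omega)))
            (hc _ (by omega))
          exact h.2
        set Bnum : ℕ := 3 * (n * ((n - 1) * W)) + n with hB
        set Mm : ℕ := N + 1 + Bnum with hMm
        have hcons_g : ∀ j, N + 1 ≤ j → j < Mm → ρ j ∈ Q1 → ρ (j + 1) = σgfe (ρ j) := by
          intro j hj1 _ hq
          rw [hmove j hq, hex j (by omega)]
          simp
        have hsB := segB Q1 E Win hE p w σgfe hgfe_valid hclosed hgfe hp n W hn hW hWmax
          (Mm - (N + 1)) ρ (N + 1) Mm rfl hplay hwin hcons_g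
          (fun t ht1 _ => hc t (by omega))
        have hsum := hEsum (N + 1) Mm (by omega)
        have h1 : (st Mm).2.1 < T := heT Mm (by omega)
        have h2 : 0 ≤ (st (N + 1)).2.1 := (hEB' (N + 1)).1
        have hS2 : ∑ t ∈ Finset.Ico (N + 1) Mm, w (ρ t) (ρ (t + 1)) ≤ T := by linarith
        have hmono : (n : ℤ) * (∑ t ∈ Finset.Ico (N + 1) Mm, w (ρ t) (ρ (t + 1))) ≤
            (n : ℤ) * T := mul_le_mul_of_nonneg_left hS2 (by positivity)
        have hBc : ((Bnum : ℕ) : ℤ) = 3 * ((n : ℤ) * (((n : ℤ) - 1) * W)) + n := by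
          have hcast : ((n - 1 : ℕ) : ℤ) = (n : ℤ) - 1 := by omega
          rw [hB]
          push_cast [hcast]
          ring
        have hMmc : ((Mm : ℕ) : ℤ) = (N : ℤ) + 1 + ((Bnum : ℕ) : ℤ) := by
          rw [hMm]; push_cast; ring
        rw [hT, hcz] at hmono
        have hNc : (((N + 1 : ℕ)) : ℤ) = (N : ℤ) + 1 := by push_cast; ring
        rw [hMmc, hNc, hBc] at hsB
        nlinarith [hsB, hmono, hBc]
    have hq' : ∃ q', p q' = 0 ∧ InfOften ρ q' := by
      by_contra hno
      push_neg at hno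
      have hNq : ∀ q' : Q, ∃ Nq : ℕ, p q' = 0 → ∀ i, Nq ≤ i → ρ i ≠ q' := by
        intro q'
        by_cases h0 : p q' = 0
        · have h1 := hno q' h0
          unfold InfOften at h1
          push_neg at h1
          obtain ⟨N, hN⟩ := h1
          exact ⟨N, fun _ => hN⟩
        · exact ⟨0, fun h => absurd h h0⟩
      choose f hf using hNq
      obtain ⟨i, hi, hpi⟩ := hclaim (Finset.univ.sup f)
      exact hf (ρ i) hpi i (le_trans (Finset.le_sup (Finset.mem_univ _)) hi) rfl
    obtain ⟨q', hq'0, hq'inf⟩ := hq'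
    constructor
    · exact ⟨q', hq'inf, by rw [hq'0]; exact Even.zero,
        fun q'' _ => by rw [hq'0]; exact Nat.zero_le _⟩
    · intro N
      have heN : (st N).2.1 = cz + EL w ρ N := by
        rw [hEsum 0 N (Nat.zero_le _), he0]
        unfold EL
        rw [Finset.range_eq_Ico]
      have := (hEB' N).1
      rw [hcredit]
      linarith
end

section
/- Let π be a memoryless player-2 strategy in an energy parity game ⟨G,p,w⟩ and let q be a state such that every cycle (not necessarily simple) in the restriction of the graph G_π to states reachable from q has either negative sum of weights, or sum of weights equal to 0 and odd minimal priority. Then player 1 does not win the energy parity game from q: for every finite initial credit c₀ and every player-1 strategy σ, the unique outcome of σ against π from q violates the parity condition or the energy condition with credit c₀. -/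
variable {Q : Type*}

/-- The play `ρ` is the outcome of the player-1 strategy `σ` against the memoryless
player-2 strategy `π` from `q₀`. -/
def VsMemless (Q1 : Set Q) (E : Q → Q → Prop) (σ : List Q → Q → Q) (π : Q → Q)
    (q₀ : Q) (ρ : ℕ → Q) : Prop :=
  ρ 0 = q₀ ∧ IsPlay E ρ ∧
    (∀ i, ρ i ∈ Q1 → ρ (i + 1) = σ (Hist ρ i) (ρ i)) ∧
    (∀ i, ρ i ∉ Q1 → ρ (i + 1) = π (ρ i))

/-- The graph `G_π` obtained by fixing the memoryless player-2 strategy `π`: at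
player-2 states only the `π`-edge remains; at player-1 states all edges remain. -/
def GPi (Q1 : Set Q) (E : Q → Q → Prop) (π : Q → Q) (q q' : Q) : Prop :=
  (q ∉ Q1 ∧ q' = π q) ∨ (q ∈ Q1 ∧ E q q')

/-- if every cycle of `G_π` reachable from `q` has negative sum of weights,
or zero sum of weights and odd minimal priority, then player 1 does not win the energy
parity game from `q`: for every finite initial credit `c₀` and player-1 strategy `σ`,
the outcome of `σ` against `π` from `q` violates the parity or the energy condition. -/
theorem stmt11 {Q : Type*} [Fintype Q] (Q1 : Set Q) (E : Q → Q → Prop)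
    (hE : ∀ q, ∃ q', E q q') (p : Q → ℕ) (w : Q → Q → ℤ)
    (π : Q → Q) (hπ : ∀ s ∉ Q1, E s (π s)) (q : Q)
    (hcyc : ∀ (k : ℕ) (c : ℕ → Q), 0 < k → c 0 = c k →
      (∀ j < k, GPi Q1 E π (c j) (c (j + 1))) →
      (∀ j ≤ k, Relation.ReflTransGen (GPi Q1 E π) q (c j)) →
      (∑ j ∈ Finset.range k, w (c j) (c (j + 1)) < 0 ∨
        (∑ j ∈ Finset.range k, w (c j) (c (j + 1)) = 0 ∧
          ∃ j ∈ Finset.range (k + 1), Odd (p (c j)) ∧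
            ∀ l ∈ Finset.range (k + 1), p (c j) ≤ p (c l)))) :
    ∀ (c₀ : ℕ) (σ : List Q → Q → Q), IsStrategy Q1 E σ →
      ∀ ρ, VsMemless Q1 E σ π q ρ →
        ¬(ParityCond p ρ ∧ EnergyCond w c₀ ρ) := by
  intro c₀ σ hσ ρ ⟨h0, hplay, hσstep, hπstep⟩ ⟨⟨q', hq'inf, hq'even, hq'min⟩, hen⟩
  classical
  -- each step of ρ is a GPi step
  have hstep : ∀ i, GPi Q1 E π (ρ i) (ρ (i + 1)) := by
    intro i
    by_cases h : ρ i ∈ Q1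
    · exact Or.inr ⟨h, hplay i⟩
    · exact Or.inl ⟨h, hπstep i h⟩
  have hreach : ∀ i, Relation.ReflTransGen (GPi Q1 E π) q (ρ i) := by
    intro i
    induction i with
    | zero => exact h0 ▸ Relation.ReflTransGen.refl
    | succ n ih => exact ih.tail (hstep n)
  -- shift lemma for EL
  have hELadd : ∀ a K, EL w ρ (a + K)
      = EL w ρ a + ∑ j ∈ Finset.range K, w (ρ (a + j)) (ρ (a + j + 1)) := by
    intro a K
    induction K with
    | zero => simp [EL]
    | succ n ih =>
      have : a + (n + 1) = (a + n) + 1 := by omega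
      rw [this]
      show EL w ρ ((a + n) + 1) = _
      simp only [EL, Finset.sum_range_succ] at *
      rw [ih]
      ring
  -- after some N, every visited state is visited infinitely often
  have hbound : ∀ s : Q, ¬ InfOften ρ s → ∃ M, ∀ n, M ≤ n → ρ n ≠ s := by
    intro s hs
    simpa [InfOften, not_forall, not_and] using hs
  let f : Q → ℕ := fun s => if h : InfOften ρ s then 0 else Classical.choose (hbound s h)
  set N := (Finset.univ : Finset Q).sup f with hNdef
  have hN : ∀ i, N ≤ i → InfOften ρ (ρ i) := by
    intro i hi
    by_contra h
    have hfle : f (ρ i) ≤ N := Finset.le_sup (Finset.mem_univ _)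
    have hspec := Classical.choose_spec (hbound (ρ i) h)
    have : f (ρ i) = Classical.choose (hbound (ρ i) h) := by simp [f, h]
    exact hspec i (by omega) rfl
  -- key step: from an occurrence of q' after N, a later occurrence with strictly
  -- smaller energy level
  have key : ∀ a, N ≤ a → ρ a = q' →
      ∃ b, a < b ∧ ρ b = q' ∧ EL w ρ b ≤ EL w ρ a - 1 := by
    intro a ha haq
    obtain ⟨b, hab, hbq⟩ := hq'inf (a + 1)
    have hab' : a < b := by omega
    set K := b - a with hK
    have hKpos : 0 < K := by omega
    have hbK : a + K = b := by omega
    have hd := hcyc K (fun j => ρ (a + j)) hKpos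
      (by show ρ (a + 0) = ρ (a + K); rw [hbK]; simp [haq, hbq])
      (fun j _ => by simpa [Nat.add_assoc] using hstep (a + j))
      (fun j _ => hreach (a + j))
    have hsum : ∑ j ∈ Finset.range K, w (ρ (a + j)) (ρ (a + j + 1))
        = EL w ρ b - EL w ρ a := by
      rw [← hbK, hELadd a K]; ring
    rcases hd with hneg | ⟨hzero, j, hj, hodd, hmin⟩
    · refine ⟨b, hab', hbq, ?_⟩
      simp only [← Nat.add_assoc] at hneg
      rw [hsum] at hneg
      omega
    · exfalso
      have h1 : p (ρ (a + j)) ≤ p (ρ (a + 0)) :=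
        hmin 0 (Finset.mem_range.mpr (by omega))
      have h2 : p q' ≤ p (ρ (a + j)) := hq'min _ (hN (a + j) (by omega))
      have hpj : p (ρ (a + j)) = p q' := by
        simp only [Nat.add_zero, haq] at h1
        omega
      rw [hpj] at hodd
      exact (Nat.not_odd_iff_even.mpr hq'even) hodd
  -- iterate to drive energy to -∞
  obtain ⟨a₀, ha₀, ha₀q⟩ := hq'inf N
  have iter : ∀ k : ℕ, ∃ a, N ≤ a ∧ ρ a = q' ∧ EL w ρ a ≤ EL w ρ a₀ - k := by
    intro k
    induction k with
    | zero => exact ⟨a₀, ha₀, ha₀q, by simp⟩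
    | succ n ih =>
      obtain ⟨a, haN, haq, hale⟩ := ih
      obtain ⟨b, hab, hbq, hble⟩ := key a haN haq
      exact ⟨b, by omega, hbq, by push_cast; push_cast at hale; omega⟩
  obtain ⟨a, _, _, hale⟩ := iter (c₀ + (EL w ρ a₀).toNat + 1)
  have := hen a
  have h1 : (EL w ρ a₀ : ℤ) ≤ (EL w ρ a₀).toNat := Int.self_le_toNat _
  push_cast at hale
  omega
end

section
/- Let G = ⟨Q,E⟩ be a finite directed graph with n = |Q| ≥ 2, an integer weight function w : E → ℤ, and a priority function p : Q → ℕ. Define Δ(q) = (−1)^{p(q)} · (1/n^{p(q)+1} − 1/n^{p(q)+2}) and the rational weight function w'(q,q') = w(q,q') + Δ(q). Then for every simple cycle γ in G (a cycle of length at most n in which no state is repeated except that the first and last states coincide): (i) if EL(w,γ) < 0 then EL(w',γ) < 0; (ii) if EL(w,γ) > 0 then EL(w',γ) > 0; (iii) if EL(w,γ) = 0 and the minimal priority of a state on γ is even then EL(w',γ) > 0; (iv) if EL(w,γ) = 0 and the minimal priority of a state on γ is odd then EL(w',γ) < 0. -/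
/-- with `Δ(q) = (−1)^{p q} · (1/n^{p q + 1} − 1/n^{p q + 2})` and
`w' = w + Δ`, every simple cycle `γ` of `G` satisfies:
(i) `EL(w,γ) < 0 → EL(w',γ) < 0`; (ii) `EL(w,γ) > 0 → EL(w',γ) > 0`;
(iii) if `EL(w,γ) = 0` and the minimal priority on `γ` is even then `EL(w',γ) > 0`;
(iv) if `EL(w,γ) = 0` and the minimal priority on `γ` is odd then `EL(w',γ) < 0`. -/
theorem stmt12 {Q : Type*} [Fintype Q] (E : Q → Q → Prop)
    (w : Q → Q → ℤ) (p : Q → ℕ) (n : ℕ) (hn : Fintype.card Q = n) (h2 : 2 ≤ n)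
    (Δ : Q → ℚ)
    (hΔ : ∀ q, Δ q = (-1 : ℚ) ^ (p q) *
      (1 / (n : ℚ) ^ (p q + 1) - 1 / (n : ℚ) ^ (p q + 2)))
    (w' : Q → Q → ℚ) (hw' : ∀ q q', w' q q' = (w q q' : ℚ) + Δ q)
    (k : ℕ) (c : ℕ → Q) (hk : 0 < k) (hkn : k ≤ n) (hcyc : c 0 = c k)
    (hedge : ∀ j < k, E (c j) (c (j + 1)))
    (hsimple : ∀ i j, i < k → j < k → c i = c j → i = j) :
    ((∑ j ∈ Finset.range k, w (c j) (c (j + 1)) < 0 →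
        ∑ j ∈ Finset.range k, w' (c j) (c (j + 1)) < 0) ∧
      (0 < ∑ j ∈ Finset.range k, w (c j) (c (j + 1)) →
        0 < ∑ j ∈ Finset.range k, w' (c j) (c (j + 1))) ∧
      (∑ j ∈ Finset.range k, w (c j) (c (j + 1)) = 0 →
        (∃ j ∈ Finset.range (k + 1), Even (p (c j)) ∧
          ∀ l ∈ Finset.range (k + 1), p (c j) ≤ p (c l)) →
        0 < ∑ j ∈ Finset.range k, w' (c j) (c (j + 1))) ∧
      (∑ j ∈ Finset.range k, w (c j) (c (j + 1)) = 0 →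
        (∃ j ∈ Finset.range (k + 1), Odd (p (c j)) ∧
          ∀ l ∈ Finset.range (k + 1), p (c j) ≤ p (c l)) →
        ∑ j ∈ Finset.range k, w' (c j) (c (j + 1)) < 0)) := by
  have hn1 : (1:ℚ) < (n:ℚ) := by exact_mod_cast lt_of_lt_of_le one_lt_two (by exact_mod_cast h2)
  have hnpos : (0:ℚ) < (n:ℚ) := lt_trans one_pos hn1
  have hΔ' : ∀ q, Δ q = (-1:ℚ)^(p q) * (((n:ℚ) - 1)/(n:ℚ)^(p q + 2)) := by
    intro q
    rw [hΔ]
    have h1 : ((n:ℚ))^(p q + 1) ≠ 0 := by positivity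
    have h2' : ((n:ℚ))^(p q + 2) ≠ 0 := by positivity
    congr 1
    field_simp
    ring
  have hMpos : ∀ q, (0:ℚ) < ((n:ℚ) - 1)/(n:ℚ)^(p q + 2) := by
    intro q; apply div_pos (by linarith) (by positivity)
  have habs : ∀ q, |Δ q| = ((n:ℚ) - 1)/(n:ℚ)^(p q + 2) := by
    intro q
    rw [hΔ' q, abs_mul, abs_pow, abs_neg, abs_one, one_pow, one_mul,
      abs_of_pos (hMpos q)]
  have hsum : ∑ j ∈ Finset.range k, w' (c j) (c (j + 1)) =
      ((∑ j ∈ Finset.range k, w (c j) (c (j + 1)) : ℤ) : ℚ) +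
        ∑ j ∈ Finset.range k, Δ (c j) := by
    simp only [hw']
    rw [Finset.sum_add_distrib]
    push_cast
    ring
  set S : ℤ := ∑ j ∈ Finset.range k, w (c j) (c (j + 1)) with hS
  set D : ℚ := ∑ j ∈ Finset.range k, Δ (c j) with hD
  -- global bound |D| < 1
  have hDabs : |D| < 1 := by
    have h1 : |D| ≤ ∑ j ∈ Finset.range k, |Δ (c j)| := Finset.abs_sum_le_sum_abs _ _
    have h2' : ∀ j ∈ Finset.range k, |Δ (c j)| ≤ ((n:ℚ) - 1)/(n:ℚ)^2 := by
      intro j _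
      rw [habs]
      apply div_le_div_of_nonneg_left (by linarith) (by positivity)
      exact pow_le_pow_right₀ (le_of_lt hn1) (by omega)
    have h3 : ∑ j ∈ Finset.range k, |Δ (c j)| ≤ k • (((n:ℚ) - 1)/(n:ℚ)^2) := by
      simpa using Finset.sum_le_card_nsmul _ _ _ h2'
    have h4 : (k:ℚ) • (((n:ℚ) - 1)/(n:ℚ)^2) ≤ (n:ℚ) * (((n:ℚ) - 1)/(n:ℚ)^2) := by
      rw [smul_eq_mul]
      apply mul_le_mul_of_nonneg_right _ (le_of_lt (by apply div_pos (by linarith) (by positivity)))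
      exact_mod_cast hkn
    have h5 : (n:ℚ) * (((n:ℚ) - 1)/(n:ℚ)^2) < 1 := by
      rw [mul_div_assoc', div_lt_one (by positivity)]
      nlinarith
    calc |D| ≤ ∑ j ∈ Finset.range k, |Δ (c j)| := h1
      _ ≤ (k:ℕ) • (((n:ℚ) - 1)/(n:ℚ)^2) := h3
      _ = (k:ℚ) • (((n:ℚ) - 1)/(n:ℚ)^2) := by simp
      _ ≤ (n:ℚ) * (((n:ℚ) - 1)/(n:ℚ)^2) := h4
      _ < 1 := h5
  obtain ⟨hDlo, hDhi⟩ := abs_lt.mp hDabs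
  -- helper for (iii)/(iv): reduce the witness to j₀ < k with same priority bound
  have hwit : ∀ j ∈ Finset.range (k + 1), ∃ j₀ < k, c j₀ = c j := by
    intro j hj
    rcases lt_or_eq_of_le (Nat.lt_succ_iff.mp (Finset.mem_range.mp hj)) with h | h
    · exact ⟨j, h, rfl⟩
    · exact ⟨0, hk, by rw [hcyc, h]⟩
  refine ⟨?_, ?_, ?_, ?_⟩
  · intro hneg
    have : (S:ℚ) ≤ -1 := by exact_mod_cast (by omega : S ≤ -1)
    rw [hsum]; linarith
  · intro hpos
    have : (1:ℚ) ≤ (S:ℚ) := by exact_mod_cast (by omega : 1 ≤ S)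
    rw [hsum]; linarith
  · intro hzero ⟨j, hj, hje, hjmin⟩
    obtain ⟨j₀, hj₀k, hcj₀⟩ := hwit j hj
    rw [hsum, hzero]
    push_cast
    rw [zero_add]
    set m := p (c j)
    have hmin : ∀ l < k, m ≤ p (c l) := fun l hl =>
      hjmin l (Finset.mem_range.mpr (by omega))
    have hj₀mem : j₀ ∈ Finset.range k := Finset.mem_range.mpr hj₀k
    have hsplit : D = Δ (c j₀) + ∑ l ∈ (Finset.range k).erase j₀, Δ (c l) :=
      (Finset.add_sum_erase _ _ hj₀mem).symm
    have hval : Δ (c j₀) = ((n:ℚ) - 1)/(n:ℚ)^(m + 2) := by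
      rw [hΔ' (c j₀), hcj₀, (hje).neg_one_pow, one_mul]
    have hrest : ∀ l ∈ (Finset.range k).erase j₀,
        -(((n:ℚ) - 1)/(n:ℚ)^(m + 3)) ≤ Δ (c l) := by
      intro l hl
      have hlk : l < k := Finset.mem_range.mp (Finset.mem_of_mem_erase hl)
      rcases Nat.even_or_odd (p (c l)) with he | ho
      · rw [hΔ' (c l), he.neg_one_pow, one_mul]
        have := hMpos (c l)
        linarith [this, div_pos (by linarith : (0:ℚ) < (n:ℚ)-1) (by positivity : (0:ℚ) < (n:ℚ)^(m+3))]
      · rw [hΔ' (c l), ho.neg_one_pow, neg_one_mul, neg_le_neg_iff]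
        apply div_le_div_of_nonneg_left (by linarith) (by positivity)
        apply pow_le_pow_right₀ (le_of_lt hn1)
        have h1 : m ≤ p (c l) := hmin l hlk
        have h2' : m ≠ p (c l) := by
          intro h; rw [← h] at ho; exact (Nat.not_odd_iff_even.mpr hje) ho
        omega
    have hcard : ((Finset.range k).erase j₀).card = k - 1 := by
      rw [Finset.card_erase_of_mem hj₀mem, Finset.card_range]
    have hsum2 : ((k:ℚ) - 1) • (-(((n:ℚ) - 1)/(n:ℚ)^(m + 3))) ≤
        ∑ l ∈ (Finset.range k).erase j₀, Δ (c l) := by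
      have := Finset.card_nsmul_le_sum _ _ _ hrest
      rw [hcard] at this
      calc ((k:ℚ) - 1) • (-(((n:ℚ) - 1)/(n:ℚ)^(m + 3)))
          = ((k - 1 : ℕ):ℚ) • (-(((n:ℚ) - 1)/(n:ℚ)^(m + 3))) := by
            congr 1; push_cast [Nat.cast_sub hk]; ring
        _ = (k - 1 : ℕ) • (-(((n:ℚ) - 1)/(n:ℚ)^(m + 3))) := by simp
        _ ≤ _ := this
    have hfin : (0:ℚ) < ((n:ℚ) - 1)/(n:ℚ)^(m + 2) -
        ((k:ℚ) - 1) * (((n:ℚ) - 1)/(n:ℚ)^(m + 3)) := by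
      have hp2 : (0:ℚ) < (n:ℚ)^(m+2) := by positivity
      have heq : ((n:ℚ) - 1)/(n:ℚ)^(m + 2) -
          ((k:ℚ) - 1) * (((n:ℚ) - 1)/(n:ℚ)^(m + 3)) =
          ((n:ℚ) - 1) * ((n:ℚ) - ((k:ℚ) - 1)) / (n:ℚ)^(m + 3) := by
        rw [show m + 3 = (m + 2) + 1 from rfl, pow_succ]
        field_simp
        ring
      rw [heq]
      apply div_pos _ (by positivity)
      apply mul_pos (by linarith)
      have : (k:ℚ) ≤ (n:ℚ) := by exact_mod_cast hkn
      linarith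
    rw [hsplit] at *
    have := hsum2
    rw [smul_eq_mul] at this
    calc (0:ℚ) < ((n:ℚ) - 1)/(n:ℚ)^(m + 2) -
        ((k:ℚ) - 1) * (((n:ℚ) - 1)/(n:ℚ)^(m + 3)) := hfin
      _ ≤ Δ (c j₀) + ∑ l ∈ (Finset.range k).erase j₀, Δ (c l) := by
          rw [hval]; linarith
  · intro hzero ⟨j, hj, hjo, hjmin⟩
    obtain ⟨j₀, hj₀k, hcj₀⟩ := hwit j hj
    rw [hsum, hzero]
    push_cast
    rw [zero_add]
    set m := p (c j)
    have hmin : ∀ l < k, m ≤ p (c l) := fun l hl =>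
      hjmin l (Finset.mem_range.mpr (by omega))
    have hj₀mem : j₀ ∈ Finset.range k := Finset.mem_range.mpr hj₀k
    have hsplit : D = Δ (c j₀) + ∑ l ∈ (Finset.range k).erase j₀, Δ (c l) :=
      (Finset.add_sum_erase _ _ hj₀mem).symm
    have hval : Δ (c j₀) = -(((n:ℚ) - 1)/(n:ℚ)^(m + 2)) := by
      rw [hΔ' (c j₀), hcj₀, (hjo).neg_one_pow, neg_one_mul]
    have hrest : ∀ l ∈ (Finset.range k).erase j₀,
        Δ (c l) ≤ ((n:ℚ) - 1)/(n:ℚ)^(m + 3) := by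
      intro l hl
      have hlk : l < k := Finset.mem_range.mp (Finset.mem_of_mem_erase hl)
      rcases Nat.even_or_odd (p (c l)) with he | ho
      · rw [hΔ' (c l), he.neg_one_pow, one_mul]
        apply div_le_div_of_nonneg_left (by linarith) (by positivity)
        apply pow_le_pow_right₀ (le_of_lt hn1)
        have h1 : m ≤ p (c l) := hmin l hlk
        have h2' : m ≠ p (c l) := by
          intro h; rw [← h] at he; exact (Nat.not_even_iff_odd.mpr hjo) he
        omega
      · rw [hΔ' (c l), ho.neg_one_pow, neg_one_mul]
        have h1 := hMpos (c l)
        have h2' : (0:ℚ) < ((n:ℚ)-1)/(n:ℚ)^(m+3) :=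
          div_pos (by linarith) (by positivity)
        linarith
    have hcard : ((Finset.range k).erase j₀).card = k - 1 := by
      rw [Finset.card_erase_of_mem hj₀mem, Finset.card_range]
    have hsum2 : ∑ l ∈ (Finset.range k).erase j₀, Δ (c l) ≤
        ((k:ℚ) - 1) • (((n:ℚ) - 1)/(n:ℚ)^(m + 3)) := by
      have := Finset.sum_le_card_nsmul _ _ _ hrest
      rw [hcard] at this
      calc ∑ l ∈ (Finset.range k).erase j₀, Δ (c l)
          ≤ (k - 1 : ℕ) • (((n:ℚ) - 1)/(n:ℚ)^(m + 3)) := this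
        _ = ((k - 1 : ℕ):ℚ) • (((n:ℚ) - 1)/(n:ℚ)^(m + 3)) := by simp
        _ = ((k:ℚ) - 1) • (((n:ℚ) - 1)/(n:ℚ)^(m + 3)) := by
            congr 1; push_cast [Nat.cast_sub hk]; ring
    have hfin : (0:ℚ) < ((n:ℚ) - 1)/(n:ℚ)^(m + 2) -
        ((k:ℚ) - 1) * (((n:ℚ) - 1)/(n:ℚ)^(m + 3)) := by
      have heq : ((n:ℚ) - 1)/(n:ℚ)^(m + 2) -
          ((k:ℚ) - 1) * (((n:ℚ) - 1)/(n:ℚ)^(m + 3)) =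
          ((n:ℚ) - 1) * ((n:ℚ) - ((k:ℚ) - 1)) / (n:ℚ)^(m + 3) := by
        rw [show m + 3 = (m + 2) + 1 from rfl, pow_succ]
        field_simp
        ring
      rw [heq]
      apply div_pos _ (by positivity)
      apply mul_pos (by linarith)
      have : (k:ℚ) ≤ (n:ℚ) := by exact_mod_cast hkn
      linarith
    rw [hsplit]
    have := hsum2
    rw [smul_eq_mul] at this
    rw [hval]
    linarith
end
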